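/- Let p be an optimal feasible price schedule. If q ∈ ∂𝒬 and there exists a unit vector v ∈ ℝ^N with v_n ≥ 0 for all n lying in the interior of the outward normal cone NC(q) = {w ∈ ℝ^N : w·(q̂ − q) ≤ 0 for all q̂ ∈ 𝒬}, then q is pooling, i.e., D(q) has positive measure under f(x)dx. -/

import Mathlib

open MeasureTheory Set

noncomputable section

namespace Stmt13

variable {N : ℕ}

/-- Dot product on `ℝ^N`. -/
def dot (x q : Fin N → ℝ) : ℝ := ∑ n, x n * q n

/-- The box `[a,b]^N`. -/
def box (a b : ℝ) : Set (Fin N → ℝ) := Icc (fun _ => a) (fun _ => b)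

/-- `φ(x) = x·∇f(x) + (N+1)·f(x)`. -/
def phi (f : (Fin N → ℝ) → ℝ) (x : Fin N → ℝ) : ℝ :=
  (∑ n, x n * fderiv ℝ f x (Pi.single n 1)) + (N + 1) * f x

/-- The boundary integral `∫_{[x̲,x̄]^{N−1}} 1_A(ι_n^c(y)) f(ι_n^c(y)) dy`, written as an
integral over the full box divided by the length of the redundant coordinate. -/
def bInt (xl xu : ℝ) (f : (Fin N → ℝ) → ℝ) (n : Fin N) (c : ℝ) (A : Set (Fin N → ℝ)) : ℝ :=
  (xu - xl)⁻¹ *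
    ∫ y in box xl xu, A.indicator f (Function.update y n c)

/-- The transformed measure `μ` of the type distribution, as a set function:
`μ(A) = Σₙ (x̄·∫ 1_A(ι_n^{x̄}) f − x̲·∫ 1_A(ι_n^{x̲}) f) − ∫_{A} φ`. -/
def mu (xl xu : ℝ) (f : (Fin N → ℝ) → ℝ) (A : Set (Fin N → ℝ)) : ℝ :=
  (∑ n, (xu * bInt xl xu f n xu A - xl * bInt xl xu f n xl A)) -
    ∫ x in A ∩ box xl xu, phi f x

/-- The indirect utility `u_p(x) = sup_{q ∈ Q} (x·q − p(q))`. -/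
def indirect (Q : Set (Fin N → ℝ)) (p : (Fin N → ℝ) → ℝ) (x : Fin N → ℝ) : ℝ :=
  sSup ((fun q => dot x q - p q) '' Q)

/-- The lower convex envelope `p̄(q) = sup_{x ∈ X} (x·q − u_p(x))`. -/
def envelope (X Q : Set (Fin N → ℝ)) (p : (Fin N → ℝ) → ℝ) (q : Fin N → ℝ) : ℝ :=
  sSup ((fun x => dot x q - indirect Q p x) '' X)

/-- The demand set of a bundle `q`. -/
def demandSet (X Q : Set (Fin N → ℝ)) (p : (Fin N → ℝ) → ℝ) (q : Fin N → ℝ) :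
    Set (Fin N → ℝ) :=
  {x ∈ X | ∀ q' ∈ Q, dot x q' - envelope X Q p q' ≤ dot x q - envelope X Q p q}

/-- A feasible price schedule: bounded below, with the zero bundle priced at zero. -/
def Feasible (Q : Set (Fin N → ℝ)) (p : (Fin N → ℝ) → ℝ) : Prop :=
  BddBelow (p '' Q) ∧ p 0 = 0

/-- The seller's revenue `∫_X u_p dμ`. -/
def TR (xl xu : ℝ) (f : (Fin N → ℝ) → ℝ) (Q : Set (Fin N → ℝ))
    (p : (Fin N → ℝ) → ℝ) : ℝ :=
  (∑ n, (xu - xl)⁻¹ *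
    (xu * ∫ y in box xl xu,
            indirect Q p (Function.update y n xu) * f (Function.update y n xu)
     - xl * ∫ y in box xl xu,
            indirect Q p (Function.update y n xl) * f (Function.update y n xl)))
  - ∫ x in box xl xu, indirect Q p x * phi f x

/-- A price schedule is optimal if it is feasible and maximizes `∫_X u_p dμ` among
feasible price schedules. -/
def Optimal (xl xu : ℝ) (f : (Fin N → ℝ) → ℝ) (Q : Set (Fin N → ℝ))
    (p : (Fin N → ℝ) → ℝ) : Prop :=
  Feasible Q p ∧ ∀ p', Feasible Q p' → TR xl xu f Q p' ≤ TR xl xu f Q p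

/-- The maintained assumptions on the type density `f` on `X = [x̲,x̄]^N`. -/
def DensityHyp (xl xu : ℝ) (f : (Fin N → ℝ) → ℝ) : Prop :=
  (∀ x, 0 ≤ f x) ∧ (∫ x in box xl xu, f x = 1) ∧
  ContinuousOn f (box xl xu) ∧ ContDiffOn ℝ 1 f (interior (box xl xu)) ∧
  (∀ x ∈ frontier (box xl xu), 0 < f x) ∧
  (∃ M : ℝ, ∀ x ∈ interior (box xl xu), |phi f x| ≤ M)

/-- The maintained assumptions on the allocation space `𝒬`. -/
def QHyp (Q : Set (Fin N → ℝ)) : Prop :=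
  Convex ℝ Q ∧ IsCompact Q ∧ (∀ q ∈ Q, ∀ n, 0 ≤ q n) ∧
  (interior Q).Nonempty ∧ (0 : Fin N → ℝ) ∈ Q

/-- The measure with density `f` (the buyers' type distribution). -/
def muF (f : (Fin N → ℝ) → ℝ) : Measure (Fin N → ℝ) :=
  volume.withDensity fun x => ENNReal.ofReal (f x)

end Stmt13

namespace Stmt13

variable {N : ℕ}

/-- The outward normal cone to `𝒬` at `q`. -/
def NC (Q : Set (Fin N → ℝ)) (q : Fin N → ℝ) : Set (Fin N → ℝ) :=
  {w | ∀ q' ∈ Q, dot w (q' - q) ≤ 0}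


section AuxProof
variable {N : ℕ}

lemma dot_add_left (x y z : Fin N → ℝ) : dot (x + y) z = dot x z + dot y z := by
  simp [dot, add_mul, Finset.sum_add_distrib]

lemma dot_sub_left (x y z : Fin N → ℝ) : dot (x - y) z = dot x z - dot y z := by
  simp [dot, sub_mul, Finset.sum_sub_distrib]

lemma dot_smul_left (s : ℝ) (x z : Fin N → ℝ) : dot (s • x) z = s * dot x z := by
  simp [dot, Finset.mul_sum, mul_assoc]

lemma dot_zero_left (z : Fin N → ℝ) : dot 0 z = 0 := by simp [dot]

lemma dot_le_of_nonneg {x z : Fin N → ℝ} {R : ℝ} (hz : ∀ n, 0 ≤ z n)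
    (hR : ∑ n, z n ≤ R) (hx : ∀ n, x n ≤ 1) : dot x z ≤ R := by
  refine le_trans (Finset.sum_le_sum fun n _ => ?_) hR
  calc x n * z n ≤ 1 * z n := mul_le_mul_of_nonneg_right (hx n) (hz n)
  _ = z n := one_mul _

lemma abs_dot_le {x z : Fin N → ℝ} {R : ℝ} (hz : ∀ n, 0 ≤ z n)
    (hR : ∑ n, z n ≤ R) : |dot x z| ≤ ‖x‖ * R := by
  have h1 : |dot x z| ≤ ∑ n, |x n * z n| := Finset.abs_sum_le_sum_abs _ _
  have h2 : ∀ n (_ : n ∈ Finset.univ), |x n * z n| ≤ ‖x‖ * z n := by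
    intro n _
    rw [abs_mul, abs_of_nonneg (hz n)]
    exact mul_le_mul_of_nonneg_right (le_trans (le_abs_self _)
      (by simpa using norm_le_pi_norm x n)) (hz n)
  calc |dot x z| ≤ ∑ n, ‖x‖ * z n := le_trans h1 (Finset.sum_le_sum h2)
  _ = ‖x‖ * ∑ n, z n := by rw [Finset.mul_sum]
  _ ≤ ‖x‖ * R := by
      exact mul_le_mul_of_nonneg_left hR (norm_nonneg x)


variable {Q : Set (Fin N → ℝ)} {p : (Fin N → ℝ) → ℝ}

lemma zero_mem_box : (0 : Fin N → ℝ) ∈ box 0 1 := by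
  constructor <;> intro n <;> simp

lemma box_nonempty : (box 0 1 : Set (Fin N → ℝ)).Nonempty := ⟨0, zero_mem_box⟩

lemma box_compact : IsCompact (box 0 1 : Set (Fin N → ℝ)) := isCompact_Icc

lemma dot_cont (z : Fin N → ℝ) : Continuous fun x : Fin N → ℝ => dot x z := by
  unfold dot; exact continuous_finset_sum _ fun n _ => (continuous_apply n).mul continuous_const

lemma exists_R (hQc : IsCompact Q) (hQ0 : (0:Fin N → ℝ) ∈ Q) :
    ∃ R : ℝ, 0 < R ∧ ∀ q' ∈ Q, ∑ n, q' n ≤ R := by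
  obtain ⟨x, -, hx⟩ := hQc.exists_isMaxOn ⟨0, hQ0⟩
    (continuous_finset_sum Finset.univ fun n _ => continuous_apply n).continuousOn
  refine ⟨max 1 (∑ n, x n), lt_of_lt_of_le one_pos (le_max_left _ _), fun q' hq' => ?_⟩
  exact le_trans (hx hq') (le_max_right _ _)

section WithR
variable {R : ℝ} (hRQ : ∀ q' ∈ Q, ∑ n, q' n ≤ R)
  (hQpos : ∀ q' ∈ Q, ∀ n, 0 ≤ q' n)

include hRQ hQpos in
lemma indirect_bddAbove (hb : BddBelow (p '' Q)) (x : Fin N → ℝ) :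
    BddAbove ((fun q' => dot x q' - p q') '' Q) := by
  obtain ⟨B, hB⟩ := hb
  refine ⟨‖x‖ * R - B, ?_⟩
  rintro _ ⟨q', hq', rfl⟩
  have h1 : dot x q' ≤ ‖x‖ * R :=
    le_trans (le_abs_self _) (abs_dot_le (hQpos q' hq') (hRQ q' hq'))
  have h2 : B ≤ p q' := hB ⟨q', hq', rfl⟩
  simp only
  linarith

include hRQ hQpos in
lemma le_indirect (hb : BddBelow (p '' Q)) {q' : Fin N → ℝ} (hq' : q' ∈ Q)
    (x : Fin N → ℝ) : dot x q' - p q' ≤ indirect Q p x :=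
  le_csSup (indirect_bddAbove hRQ hQpos hb x) ⟨q', hq', rfl⟩

lemma indirect_le (hQ0 : (0:Fin N → ℝ) ∈ Q) {x : Fin N → ℝ} {c : ℝ}
    (h : ∀ q' ∈ Q, dot x q' - p q' ≤ c) : indirect Q p x ≤ c := by
  refine csSup_le ⟨_, ⟨0, hQ0, rfl⟩⟩ ?_
  rintro _ ⟨q', hq', rfl⟩; exact h q' hq'

include hRQ hQpos in
lemma indirect_nonneg (hb : BddBelow (p '' Q)) (hp0 : p 0 = 0)
    (hQ0 : (0:Fin N → ℝ) ∈ Q) (x : Fin N → ℝ) : 0 ≤ indirect Q p x := by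
  have := le_indirect hRQ hQpos hb hQ0 x
  simpa [dot, hp0] using this

include hRQ hQpos in
lemma indirect_lip (hb : BddBelow (p '' Q)) (hQ0 : (0:Fin N → ℝ) ∈ Q) (hR0 : 0 ≤ R)
    (x y : Fin N → ℝ) : indirect Q p x ≤ indirect Q p y + ‖x - y‖ * R := by
  refine indirect_le hQ0 fun q' hq' => ?_
  have h1 : dot x q' - dot y q' ≤ ‖x - y‖ * R := by
    have := le_trans (le_abs_self _) (abs_dot_le (x := x - y) (hQpos q' hq') (hRQ q' hq'))
    rwa [dot_sub_left] at this
  have h2 := le_indirect hRQ hQpos hb hq' y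
  linarith

include hRQ hQpos in
lemma indirect_cont (hb : BddBelow (p '' Q)) (hQ0 : (0:Fin N → ℝ) ∈ Q) (hR0 : 0 ≤ R) :
    Continuous (indirect Q p) := by
  have : LipschitzWith R.toNNReal (indirect Q p) := by
    refine LipschitzWith.of_dist_le_mul fun x y => ?_
    rw [Real.dist_eq, abs_sub_le_iff]
    have h1 := indirect_lip hRQ hQpos hb hQ0 hR0 x y
    have h2 := indirect_lip hRQ hQpos hb hQ0 hR0 y x
    have hc : (R.toNNReal : ℝ) = R := Real.coe_toNNReal _ hR0
    rw [hc]
    have hn : ‖x - y‖ = dist x y := (dist_eq_norm x y).symm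
    have hn' : ‖y - x‖ = dist x y := by rw [dist_comm x y]; exact (dist_eq_norm y x).symm
    constructor <;> nlinarith [dist_nonneg (x := x) (y := y)]
  exact this.continuous

include hRQ hQpos in
lemma envelope_bddAbove (hb : BddBelow (p '' Q)) {q' : Fin N → ℝ} (hq' : q' ∈ Q) :
    BddAbove ((fun x => dot x q' - indirect Q p x) '' box 0 1) := by
  refine ⟨p q', ?_⟩
  rintro _ ⟨z, hz, rfl⟩
  have := le_indirect hRQ hQpos hb hq' z
  simp only; linarith

include hRQ hQpos in
lemma le_envelope (hb : BddBelow (p '' Q)) {q' : Fin N → ℝ} (hq' : q' ∈ Q)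
    {x : Fin N → ℝ} (hx : x ∈ box 0 1) :
    dot x q' - indirect Q p x ≤ envelope (box 0 1) Q p q' :=
  le_csSup (envelope_bddAbove hRQ hQpos hb hq') ⟨x, hx, rfl⟩

lemma envelope_le {q' c : Fin N → ℝ → ℝ} : True := trivial

lemma envelope_le_p (q' : Fin N → ℝ) (hq' : q' ∈ Q) (hb : BddBelow (p '' Q))
    (hRQ' : ∀ q' ∈ Q, ∑ n, q' n ≤ R) (hQpos' : ∀ q' ∈ Q, ∀ n, 0 ≤ q' n) :
    envelope (box 0 1) Q p q' ≤ p q' := by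
  refine csSup_le (box_nonempty.image _) ?_
  rintro _ ⟨z, hz, rfl⟩
  have := le_indirect hRQ' hQpos' hb hq' z
  simp only; linarith

include hRQ hQpos in
lemma ell_le_indirect (hb : BddBelow (p '' Q)) {q' : Fin N → ℝ} (hq' : q' ∈ Q)
    {x : Fin N → ℝ} (hx : x ∈ box 0 1) :
    dot x q' - envelope (box 0 1) Q p q' ≤ indirect Q p x := by
  have := le_envelope hRQ hQpos hb hq' hx
  linarith

include hRQ hQpos in
lemma envelope_attain (hb : BddBelow (p '' Q)) (hQ0 : (0:Fin N → ℝ) ∈ Q) (hR0 : 0 ≤ R)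
    (q : Fin N → ℝ) :
    ∃ x ∈ box 0 1, envelope (box 0 1) Q p q = dot x q - indirect Q p x := by
  obtain ⟨x, hx, hmax⟩ := box_compact.exists_isMaxOn box_nonempty
    (((dot_cont q).sub (indirect_cont hRQ hQpos hb hQ0 hR0)).continuousOn
      (s := box 0 1))
  refine ⟨x, hx, ?_⟩
  refine IsGreatest.csSup_eq ⟨⟨x, hx, rfl⟩, ?_⟩
  rintro _ ⟨z, hz, rfl⟩
  exact hmax hz

end WithR

lemma dot_sub_right (x y z : Fin N → ℝ) : dot x (y - z) = dot x y - dot x z := by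
  simp [dot, mul_sub, Finset.sum_sub_distrib]
lemma dot_zero_right (z : Fin N → ℝ) : dot z 0 = 0 := by simp [dot]
section Geom
variable (hRQ : ∀ q' ∈ Q, ∑ n, q' n ≤ R) (hQpos : ∀ q' ∈ Q, ∀ n, 0 ≤ q' n)
  (hb : BddBelow (p '' Q)) (hQ0 : (0:Fin N → ℝ) ∈ Q) {q : Fin N → ℝ} (hqQ : q ∈ Q)

/-- The "gap" `u(x) − (x·q − p̄(q))`. -/
def gp (Q : Set (Fin N → ℝ)) (p : (Fin N → ℝ) → ℝ) (q x : Fin N → ℝ) : ℝ :=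
  indirect Q p x - (dot x q - envelope (box 0 1) Q p q)

include hRQ hQpos hb hQ0 hqQ in
lemma gap_nonneg {x : Fin N → ℝ} (hx : x ∈ box 0 1) : 0 ≤ gp Q p q x := by
  have := ell_le_indirect hRQ hQpos hb hqQ hx
  unfold gp; linarith

include hRQ hQpos hb hQ0 hqQ in
lemma gap_mono {x y : Fin N → ℝ} (hx : x ∈ box 0 1) (hy : y ∈ box 0 1)
    (h : ∀ q' ∈ Q, dot (y - x) (q' - q) ≤ 0) : gp Q p q y ≤ gp Q p q x := by
  have key : indirect Q p y ≤ indirect Q p x + (dot y q - dot x q) := by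
    refine indirect_le hQ0 fun q' hq' => ?_
    have h1 : envelope (box 0 1) Q p q' ≤ p q' := envelope_le_p q' hq' hb hRQ hQpos
    have h2 : dot x q' - envelope (box 0 1) Q p q' ≤ indirect Q p x :=
      ell_le_indirect hRQ hQpos hb hq' hx
    have h3 := h q' hq'
    rw [dot_sub_right, dot_sub_left, dot_sub_left] at h3
    linarith
  unfold gp; linarith

include hRQ hQpos hb hQ0 hqQ in
lemma gap_absorb {v : Fin N → ℝ} {ε : ℝ} (hball : ∀ w, ‖w - v‖ < ε → w ∈ NC Q q)
    {x d : Fin N → ℝ} {s : ℝ} (hx : x ∈ box 0 1) (hs : 0 ≤ s) (hd : ‖d‖ < ε)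
    (hxy : x + s • (v + d) ∈ box 0 1) :
    gp Q p q (x + s • (v + d)) ≤ gp Q p q x := by
  refine gap_mono hRQ hQpos hb hQ0 hqQ hx hxy fun q' hq' => ?_
  have hvd : v + d ∈ NC Q q := hball _ (by simpa using hd)
  have h1 : dot (v + d) (q' - q) ≤ 0 := hvd q' hq'
  have h2 : x + s • (v + d) - x = s • (v + d) := by abel
  rw [h2, dot_smul_left]
  exact mul_nonpos_of_nonneg_of_nonpos hs h1

include hRQ hQpos hb in
lemma demand_superset :
    {x ∈ box 0 1 | gp Q p q x ≤ 0} ⊆ demandSet (box 0 1) Q p q := by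
  rintro x ⟨hx, hgap⟩
  refine ⟨hx, fun q' hq' => ?_⟩
  have h1 := ell_le_indirect hRQ hQpos hb hq' hx
  unfold gp at hgap; linarith

include hRQ hQpos in
lemma q_ne_zero {v : Fin N → ℝ} {ε : ℝ} (hε : 0 < ε)
    (hball : ∀ w, ‖w - v‖ < ε → w ∈ NC Q q)
    (hQint : (interior Q).Nonempty) (hv1 : ‖v‖ = 1) (hvpos : ∀ n, 0 ≤ v n) :
    q ≠ 0 := by
  intro hq0
  obtain ⟨q0, hq0i⟩ := hQint
  obtain ⟨r, hr, hRball⟩ := Metric.mem_nhds_iff.1 (mem_interior_iff_mem_nhds.1 hq0i)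
  have hvNC : v ∈ NC Q q := hball v (by simpa using hε)
  -- all coordinates of q0 are at least r/2
  have hq0pos : ∀ n, r / 2 ≤ q0 n := by
    intro n
    have hmem : q0 - (fun _ => r / 2) ∈ Q := by
      apply hRball
      simp only [Metric.mem_ball, dist_eq_norm]
      have h0 : (q0 - fun _ => r / 2) - q0 = -(fun _ : Fin N => r / 2) := by ext m; simp
      rw [h0, norm_neg]
      have : ‖(fun _ : Fin N => r / 2)‖ ≤ r / 2 := by
        apply pi_norm_le_iff_of_nonneg (by linarith) |>.2
        intro m
        have he : ‖(fun _ : Fin N => r / 2) m‖ = |r / 2| := Real.norm_eq_abs _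
        rw [he, abs_of_nonneg (by linarith : (0:ℝ) ≤ r / 2)]
      linarith
    have h1 := hQpos _ hmem n
    have h2 : 0 ≤ q0 n - r / 2 := by simpa using h1
    linarith
  -- some coordinate of v is positive
  have hvne : v ≠ 0 := by intro h; rw [h] at hv1; simp at hv1
  obtain ⟨n, hn⟩ := Function.ne_iff.1 hvne
  have hvn : 0 < v n := lt_of_le_of_ne (hvpos n) (by simpa [eq_comm] using hn)
  -- contradiction
  have h1 : dot v (q0 - q) ≤ 0 := hvNC q0 (hRball (Metric.mem_ball_self hr))
  rw [hq0, sub_zero] at h1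
  have h2 : 0 < dot v q0 := by
    have hterm : 0 < v n * q0 n := mul_pos hvn (lt_of_lt_of_le (by linarith) (hq0pos n))
    have := Finset.single_le_sum (f := fun m => v m * q0 m)
      (fun m _ => mul_nonneg (hvpos m) (le_trans (by linarith) (hq0pos m)))
      (Finset.mem_univ n)
    unfold dot; linarith
  linarith

/-- The perturbed price schedule. -/
def pt (Q : Set (Fin N → ℝ)) (p : (Fin N → ℝ) → ℝ) (q : Fin N → ℝ) (t : ℝ) :
    (Fin N → ℝ) → ℝ := fun q' =>
  if q' = 0 then 0 else if q' = q then envelope (box 0 1) Q p q - t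
  else envelope (box 0 1) Q p q'

include hRQ hQpos hb in
lemma pt_feasible (t : ℝ) : Feasible Q (pt Q p q t) := by
  constructor
  · refine ⟨min 0 (min (envelope (box 0 1) Q p q - t)
      (- indirect Q p 0)), ?_⟩
    rintro _ ⟨q', hq', rfl⟩
    unfold pt
    split_ifs with h1 h2
    · exact min_le_left _ _
    · exact le_trans (min_le_right _ _) (min_le_left _ _)
    · refine le_trans (le_trans (min_le_right _ _) (min_le_right _ _)) ?_
      have := le_envelope hRQ hQpos hb hq' zero_mem_box
      rw [dot_zero_left] at this
      linarith
  · simp [pt]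

include hRQ hQpos hb hQ0 hqQ in
lemma indirect_pt (hp0 : p 0 = 0) (hq0 : q ≠ 0) {t : ℝ} (ht : 0 ≤ t)
    {x : Fin N → ℝ} (hx : x ∈ box 0 1) :
    indirect Q (pt Q p q t) x
      = max (indirect Q p x) (dot x q - envelope (box 0 1) Q p q + t) := by
  have hbt : BddBelow (pt Q p q t '' Q) := (pt_feasible hRQ hQpos hb t).1
  have hptq : pt Q p q t q = envelope (box 0 1) Q p q - t := by
    unfold pt; rw [if_neg hq0, if_pos rfl]
  apply le_antisymm
  · refine indirect_le hQ0 fun q' hq' => ?_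
    unfold pt
    split_ifs with h1 h2
    · subst h1
      have h0 := indirect_nonneg hRQ hQpos hb hp0 hQ0 x
      refine le_max_of_le_left ?_
      rw [dot_zero_right]
      linarith
    · subst h2
      refine le_max_of_le_right ?_; ring_nf; exact le_rfl
    · refine le_max_of_le_left ?_
      exact ell_le_indirect hRQ hQpos hb hq' hx
  · rw [max_le_iff]
    constructor
    · refine indirect_le hQ0 fun q' hq' => ?_
      by_cases h1 : q' = 0
      · subst h1
        have h2 : dot x 0 - p 0 = dot x 0 - pt Q p q t 0 := by simp [pt, hp0]
        rw [h2]
        exact le_indirect hRQ hQpos hbt hQ0 x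
      · by_cases h2 : q' = q
        · subst h2
          have h3 : envelope (box 0 1) Q p q' ≤ p q' := envelope_le_p q' hq' hb hRQ hQpos
          have h4 := le_indirect hRQ hQpos hbt hq' x
          rw [hptq] at h4
          linarith
        · have h3 : envelope (box 0 1) Q p q' ≤ p q' := envelope_le_p q' hq' hb hRQ hQpos
          have h4 := le_indirect hRQ hQpos hbt hq' x
          have h5 : pt Q p q t q' = envelope (box 0 1) Q p q' := by
            unfold pt; rw [if_neg h1, if_neg h2]
          rw [h5] at h4
          linarith
    · have h4 := le_indirect hRQ hQpos hbt hqQ x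
      rw [hptq] at h4
      linarith

end Geom

lemma box_measurable : MeasurableSet (box 0 1 : Set (Fin N → ℝ)) :=
  measurableSet_Icc

lemma box_eq_pi : (box 0 1 : Set (Fin N → ℝ)) = Set.pi univ (fun _ => Icc (0:ℝ) 1) := by
  rw [Set.pi_univ_Icc]; rfl

lemma interior_box : interior (box 0 1 : Set (Fin N → ℝ)) = Set.pi univ (fun _ => Ioo (0:ℝ) 1) := by
  rw [box_eq_pi, interior_pi_set finite_univ]
  simp [interior_Icc]

lemma volume_box : volume (box 0 1 : Set (Fin N → ℝ)) = 1 := by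
  rw [box_eq_pi, volume_pi_pi]
  simp [Real.volume_Icc]

lemma volume_interior_box : volume (interior (box 0 1 : Set (Fin N → ℝ))) = 1 := by
  rw [interior_box, volume_pi_pi]
  simp [Real.volume_Ioo]

lemma volume_box_diff_interior :
    volume ((box 0 1 : Set (Fin N → ℝ)) \ interior (box 0 1)) = 0 := by
  rw [measure_diff interior_subset (measurableSet_interior).nullMeasurableSet
    (by rw [volume_interior_box]; exact ENNReal.one_ne_top), volume_box, volume_interior_box,
    tsub_self]

lemma ae_mem_interior_box :
    ∀ᵐ x ∂(volume.restrict (box 0 1 : Set (Fin N → ℝ))), x ∈ interior (box 0 1) := by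
  rw [ae_restrict_iff' box_measurable]
  refine measure_mono_null ?_ volume_box_diff_interior
  intro x hx
  simp only [mem_compl_iff, mem_setOf_eq, Classical.not_imp] at hx
  exact ⟨hx.1, hx.2⟩

lemma update_mem_box {y : Fin N → ℝ} (hy : y ∈ box 0 1) (n : Fin N) {c : ℝ}
    (hc : c ∈ Icc (0:ℝ) 1) : Function.update y n c ∈ box 0 1 := by
  constructor <;> intro m <;> rw [Function.update_apply] <;> split_ifs
  · exact hc.1
  · exact hy.1 m
  · exact hc.2
  · exact hy.2 m

lemma update_one_mem_frontier {y : Fin N → ℝ} (hy : y ∈ box 0 1) (n : Fin N) :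
    Function.update y n 1 ∈ frontier (box 0 1) := by
  rw [box_compact.isClosed.frontier_eq, mem_diff]
  refine ⟨update_mem_box hy n ⟨zero_le_one, le_rfl⟩, ?_⟩
  rw [interior_box]
  intro h
  have := h n (mem_univ n)
  simp at this

lemma update_continuous (n : Fin N) (c : ℝ) :
    Continuous (fun y : Fin N → ℝ => Function.update y n c) := by
  refine continuous_pi fun m => ?_
  simp only [Function.update_apply]
  split_ifs
  · exact continuous_const
  · exact continuous_apply m

section DensityFacts
variable {f : (Fin N → ℝ) → ℝ} (hf0 : ∀ x, 0 ≤ f x)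
  (hfc : ContinuousOn f (box 0 1))
  (hfd : ContDiffOn ℝ 1 f (interior (box 0 1)))
  (hfb : ∀ x ∈ frontier (box 0 1), 0 < f x)

include hfc hfb in
lemma exists_c0 (hN : 0 < N) : ∃ c0 : ℝ, 0 < c0 ∧
    ∀ y ∈ box 0 1, ∀ n : Fin N, c0 ≤ f (Function.update y n 1) := by
  have hfr : IsCompact (frontier (box 0 1 : Set (Fin N → ℝ))) :=
    box_compact.of_isClosed_subset isClosed_frontier
      (by rw [box_compact.isClosed.frontier_eq]; exact diff_subset)
  have hne : (frontier (box 0 1 : Set (Fin N → ℝ))).Nonempty := by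
    obtain ⟨y, hy⟩ := (box_nonempty : (box 0 1 : Set (Fin N → ℝ)).Nonempty)
    exact ⟨_, update_one_mem_frontier hy ⟨0, hN⟩⟩
  obtain ⟨z, hz, hmin⟩ := hfr.exists_isMinOn hne
    (hfc.mono (by rw [box_compact.isClosed.frontier_eq]; exact diff_subset))
  refine ⟨f z, hfb z hz, fun y hy n => hmin (update_one_mem_frontier hy n)⟩

include hf0 hfd in
lemma phi_eq_zero_of_f_zero {x : Fin N → ℝ} (hx : x ∈ interior (box 0 1))
    (hfx : f x = 0) : phi f x = 0 := by
  have hmin : IsLocalMin f x := by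
    refine Filter.Eventually.of_forall fun z => ?_
    rw [hfx]; exact hf0 z
  have hd : fderiv ℝ f x = 0 := hmin.fderiv_eq_zero
  unfold phi
  rw [hd, hfx]
  simp

end DensityFacts


section Integrals
variable {f : (Fin N → ℝ) → ℝ} {Q : Set (Fin N → ℝ)} {p : (Fin N → ℝ) → ℝ}
  {q : Fin N → ℝ} {R M : ℝ}

/-- Sublevel sets of the gap. -/
def Aset (Q : Set (Fin N → ℝ)) (p : (Fin N → ℝ) → ℝ) (q : Fin N → ℝ) (t : ℝ) :
    Set (Fin N → ℝ) := {x ∈ box 0 1 | gp Q p q x < t}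

/-- Points of the box where the density is positive. -/
def Pset (f : (Fin N → ℝ) → ℝ) : Set (Fin N → ℝ) := {x ∈ box 0 1 | 0 < f x}

/-- Cylinder measure: the `(N-1)`-dimensional measure of the trace of `B` on the face
`x_n = 1`, written as an `N`-dimensional measure of a cylinder. -/
def cylM (n : Fin N) (B : Set (Fin N → ℝ)) : ENNReal :=
  volume {y ∈ box 0 1 | Function.update y n 1 ∈ B}

/-- Total face measure of the sublevel set. -/
def SS (Q : Set (Fin N → ℝ)) (p : (Fin N → ℝ) → ℝ) (q : Fin N → ℝ) (t : ℝ) : ℝ :=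
  ∑ n : Fin N, (cylM n (Aset Q p q t)).toReal

/-- The utility increment of the perturbed schedule. -/
def Gfun (Q : Set (Fin N → ℝ)) (p : (Fin N → ℝ) → ℝ) (q : Fin N → ℝ) (t : ℝ)
    (x : Fin N → ℝ) : ℝ :=
  max (indirect Q p x) (dot x q - envelope (box 0 1) Q p q + t) - indirect Q p x

lemma Gfun_eq_gap (t : ℝ) (x : Fin N → ℝ) :
    Gfun Q p q t x = max 0 (t - gp Q p q x) := by
  unfold Gfun gp
  rcases le_total (indirect Q p x) (dot x q - envelope (box 0 1) Q p q + t) with h | h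
  · rw [max_eq_right h, max_eq_right (by linarith)]; ring
  · rw [max_eq_left h, max_eq_left (by linarith)]; ring

lemma Gfun_nonneg (t : ℝ) (x : Fin N → ℝ) : 0 ≤ Gfun Q p q t x := by
  rw [Gfun_eq_gap]; exact le_max_left _ _

lemma Gfun_le_t {t : ℝ} (ht : 0 ≤ t) {x : Fin N → ℝ} (hgap : 0 ≤ gp Q p q x) :
    Gfun Q p q t x ≤ t := by
  rw [Gfun_eq_gap]; rw [max_le_iff]; exact ⟨ht, by linarith⟩

lemma Gfun_zero {t : ℝ} {x : Fin N → ℝ} (h : t ≤ gp Q p q x) : Gfun Q p q t x = 0 := by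
  rw [Gfun_eq_gap, max_eq_left (by linarith)]

lemma Gfun_ge_half {t : ℝ} {x : Fin N → ℝ} (h : gp Q p q x < t / 2) :
    t / 2 ≤ Gfun Q p q t x := by
  rw [Gfun_eq_gap]; refine le_max_of_le_right (by linarith)

section ContFacts
variable (hRQ : ∀ q' ∈ Q, ∑ n, q' n ≤ R) (hQpos : ∀ q' ∈ Q, ∀ n, 0 ≤ q' n)
  (hb : BddBelow (p '' Q)) (hQ0 : (0:Fin N → ℝ) ∈ Q) (hR0 : 0 ≤ R)

include hRQ hQpos hb hQ0 hR0

lemma gp_cont : Continuous (gp Q p q) :=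
  (indirect_cont hRQ hQpos hb hQ0 hR0).sub ((dot_cont q).sub continuous_const)

lemma Gfun_cont (t : ℝ) : Continuous (Gfun Q p q t) :=
  (((indirect_cont hRQ hQpos hb hQ0 hR0).max
    (((dot_cont q).sub continuous_const).add continuous_const))).sub
    (indirect_cont hRQ hQpos hb hQ0 hR0)

lemma Aset_measurable (t : ℝ) : MeasurableSet (Aset Q p q t) := by
  have : Aset Q p q t = box 0 1 ∩ (gp Q p q) ⁻¹' (Iio t) := rfl
  rw [this]
  exact box_measurable.inter ((gp_cont hRQ hQpos hb hQ0 hR0).measurable measurableSet_Iio)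

end ContFacts

lemma Aset_subset_box (t : ℝ) : Aset Q p q t ⊆ box 0 1 := fun _ h => h.1

lemma Pset_subset_box : Pset f ⊆ box 0 1 := fun _ h => h.1

lemma Pset_measurable (hfc : ContinuousOn f (box 0 1)) : MeasurableSet (Pset f) := by
  obtain ⟨u, hu, hueq⟩ := (continuousOn_iff'.1 hfc) (Ioi 0) isOpen_Ioi
  have : Pset f = u ∩ box 0 1 := by
    rw [← hueq]; ext x; exact ⟨fun h => ⟨h.2, h.1⟩, fun h => ⟨h.2, h.1⟩⟩
  rw [this]
  exact hu.measurableSet.inter box_measurable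

instance restrictBoxFinite : IsFiniteMeasure (volume.restrict (box 0 1 : Set (Fin N → ℝ))) :=
  ⟨by rw [Measure.restrict_apply_univ, volume_box]; exact ENNReal.one_lt_top⟩

lemma phi_aesm (hfc : ContinuousOn f (box 0 1)) :
    AEStronglyMeasurable (phi f) (volume.restrict (box 0 1)) := by
  have h1 : Measurable fun x : Fin N → ℝ => ∑ n, x n * fderiv ℝ f x (Pi.single n 1) :=
    Finset.measurable_sum _ fun n _ =>
      (measurable_pi_apply n).mul (measurable_fderiv_apply_const ℝ f _)
  have h2 : AEMeasurable f (volume.restrict (box 0 1)) := hfc.aemeasurable box_measurable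
  exact (h1.aemeasurable.add ((h2.const_mul _))).aestronglyMeasurable

lemma phi_integrableOn (hfc : ContinuousOn f (box 0 1))
    (hφM : ∀ x ∈ interior (box 0 1), |phi f x| ≤ M) :
    IntegrableOn (phi f) (box 0 1) := by
  refine ⟨phi_aesm hfc, ?_⟩
  apply HasFiniteIntegral.of_bounded (C := M)
  filter_upwards [ae_mem_interior_box] with x hx
  simpa [Real.norm_eq_abs] using hφM x hx

lemma bdd_mul_phi {g : (Fin N → ℝ) → ℝ} (hg : Continuous g)
    (hfc : ContinuousOn f (box 0 1))
    (hφM : ∀ x ∈ interior (box 0 1), |phi f x| ≤ M) :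
    IntegrableOn (fun x => g x * phi f x) (box 0 1) := by
  obtain ⟨C, hC⟩ := box_compact.exists_bound_of_continuousOn hg.continuousOn
  refine Integrable.bdd_mul (c := C) (phi_integrableOn hfc hφM) hg.aestronglyMeasurable.restrict ?_
  exact (ae_restrict_iff' box_measurable).2 (Filter.Eventually.of_forall fun x hx => hC x hx)

lemma face_integrable {g : (Fin N → ℝ) → ℝ} (hg : Continuous g)
    (hfc : ContinuousOn f (box 0 1)) (n : Fin N) :
    IntegrableOn (fun y => g (Function.update y n 1) * f (Function.update y n 1))
      (box 0 1) := by
  have h1 : ContinuousOn (fun y : Fin N → ℝ =>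
      g (Function.update y n 1) * f (Function.update y n 1)) (box 0 1) := by
    refine ContinuousOn.mul ((hg.comp (update_continuous n 1)).continuousOn) ?_
    exact hfc.comp (update_continuous n 1).continuousOn
      (fun y hy => update_mem_box hy n ⟨zero_le_one, le_rfl⟩)
  exact h1.integrableOn_compact box_compact

lemma TR_eq (P' : (Fin N → ℝ) → ℝ) : TR 0 1 f Q P' =
    (∑ n, ∫ y in box 0 1,
      indirect Q P' (Function.update y n 1) * f (Function.update y n 1))
    - ∫ x in box 0 1, indirect Q P' x * phi f x := by
  unfold TR; norm_num

section TRDiff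
variable (hRQ : ∀ q' ∈ Q, ∑ n, q' n ≤ R) (hQpos : ∀ q' ∈ Q, ∀ n, 0 ≤ q' n)
  (hb : BddBelow (p '' Q)) (hQ0 : (0:Fin N → ℝ) ∈ Q) (hR0 : 0 ≤ R)
  (hqQ : q ∈ Q) (hp0 : p 0 = 0) (hq0 : q ≠ 0)
  (hfc : ContinuousOn f (box 0 1))
  (hφM : ∀ x ∈ interior (box 0 1), |phi f x| ≤ M)

include hRQ hQpos hb hQ0 hR0 hqQ hp0 hq0 hfc hφM in
lemma TR_pt {t : ℝ} (ht : 0 ≤ t) :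
    TR 0 1 f Q (pt Q p q t) = TR 0 1 f Q p +
    ((∑ n, ∫ y in box 0 1,
        Gfun Q p q t (Function.update y n 1) * f (Function.update y n 1))
      - ∫ x in box 0 1, Gfun Q p q t x * phi f x) := by
  have hucont := indirect_cont hRQ hQpos hb hQ0 hR0
  have hGcont := Gfun_cont hRQ hQpos hb hQ0 hR0 (q := q) t
  have hface : ∀ n : Fin N, (∫ y in box 0 1,
      indirect Q (pt Q p q t) (Function.update y n 1) * f (Function.update y n 1)) =
      (∫ y in box 0 1, indirect Q p (Function.update y n 1) * f (Function.update y n 1))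
      + ∫ y in box 0 1, Gfun Q p q t (Function.update y n 1) * f (Function.update y n 1) := by
    intro n
    rw [← integral_add (face_integrable hucont hfc n) (face_integrable hGcont hfc n)]
    refine setIntegral_congr_fun box_measurable fun y hy => ?_
    have hmem := update_mem_box hy n ⟨zero_le_one, le_rfl⟩
    rw [indirect_pt hRQ hQpos hb hQ0 hqQ hp0 hq0 ht hmem]
    unfold Gfun; ring
  have hphi : (∫ x in box 0 1, indirect Q (pt Q p q t) x * phi f x) =
      (∫ x in box 0 1, indirect Q p x * phi f x)
      + ∫ x in box 0 1, Gfun Q p q t x * phi f x := by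
    rw [← integral_add (bdd_mul_phi hucont hfc hφM) (bdd_mul_phi hGcont hfc hφM)]
    refine setIntegral_congr_fun box_measurable fun x hx => ?_
    rw [indirect_pt hRQ hQpos hb hQ0 hqQ hp0 hq0 ht hx]
    unfold Gfun; ring
  rw [TR_eq, TR_eq, Finset.sum_congr rfl fun n _ => hface n, Finset.sum_add_distrib, hphi]
  ring

include hRQ hQpos hb hQ0 hR0 hqQ hp0 hq0 hfc hφM in
lemma opt_ineq (hopt : Optimal 0 1 f Q p) {t : ℝ} (ht : 0 ≤ t) :
    (∑ n, ∫ y in box 0 1,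
        Gfun Q p q t (Function.update y n 1) * f (Function.update y n 1))
      ≤ ∫ x in box 0 1, Gfun Q p q t x * phi f x := by
  have h := hopt.2 (pt Q p q t) (pt_feasible hRQ hQpos hb t)
  rw [TR_pt hRQ hQpos hb hQ0 hR0 hqQ hp0 hq0 hfc hφM ht] at h
  linarith

end TRDiff
end Integrals

section GainLoss
variable {f : (Fin N → ℝ) → ℝ} {Q : Set (Fin N → ℝ)} {p : (Fin N → ℝ) → ℝ}
  {q : Fin N → ℝ} {R M c0 : ℝ}
  (hRQ : ∀ q' ∈ Q, ∑ n, q' n ≤ R) (hQpos : ∀ q' ∈ Q, ∀ n, 0 ≤ q' n)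
  (hb : BddBelow (p '' Q)) (hQ0 : (0:Fin N → ℝ) ∈ Q) (hR0 : 0 ≤ R)
  (hqQ : q ∈ Q) (hp0 : p 0 = 0) (hq0 : q ≠ 0)
  (hf0 : ∀ x, 0 ≤ f x) (hfc : ContinuousOn f (box 0 1))
  (hfd : ContDiffOn ℝ 1 f (interior (box 0 1)))
  (hφM : ∀ x ∈ interior (box 0 1), |phi f x| ≤ M) (hM0 : 0 ≤ M)
  (hc0 : ∀ y ∈ box 0 1, ∀ n : Fin N, c0 ≤ f (Function.update y n 1)) (hc0pos : 0 < c0)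

include hRQ hQpos hb hQ0 hR0 hqQ hf0 hfc hc0 hc0pos in
lemma gain_ge {t : ℝ} (ht : 0 < t) (n : Fin N) :
    t / 2 * c0 * (cylM n (Aset Q p q (t/2))).toReal
      ≤ ∫ y in box 0 1, Gfun Q p q t (Function.update y n 1) *
          f (Function.update y n 1) := by
  have hAmeas := Aset_measurable hRQ hQpos hb hQ0 hR0 (q := q) (t/2)
  set S : Set (Fin N → ℝ) :=
    {y ∈ box 0 1 | Function.update y n 1 ∈ Aset Q p q (t/2)} with hSdef
  have hSmeas : MeasurableSet S := by
    have : S = box 0 1 ∩ (fun y : Fin N → ℝ => Function.update y n 1) ⁻¹'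
        (Aset Q p q (t/2)) := rfl
    rw [this]
    exact box_measurable.inter ((update_continuous n 1).measurable hAmeas)
  have hSsub : S ⊆ box 0 1 := fun _ h => h.1
  have hint1 : IntegrableOn (S.indicator fun _ => t / 2 * c0) (box 0 1) :=
    (integrable_const _).indicator hSmeas
  have hint2 := face_integrable (Gfun_cont hRQ hQpos hb hQ0 hR0 (q := q) t) hfc n
  have hmono : (∫ y in box 0 1, S.indicator (fun _ => t / 2 * c0) y)
      ≤ ∫ y in box 0 1, Gfun Q p q t (Function.update y n 1) *
          f (Function.update y n 1) := by
    refine setIntegral_mono_on hint1 hint2 box_measurable fun y hy => ?_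
    by_cases hyS : y ∈ S
    · rw [indicator_of_mem hyS]
      have h1 : t / 2 ≤ Gfun Q p q t (Function.update y n 1) :=
        Gfun_ge_half hyS.2.2
      have h2 : c0 ≤ f (Function.update y n 1) := hc0 y hy n
      exact mul_le_mul h1 h2 hc0pos.le (le_trans (by linarith) h1)
    · rw [indicator_of_notMem hyS]
      exact mul_nonneg (Gfun_nonneg t _) (hf0 _)
  have heq : (∫ y in box 0 1, S.indicator (fun _ => t / 2 * c0) y)
      = (cylM n (Aset Q p q (t/2))).toReal * (t / 2 * c0) := by
    rw [integral_indicator_const _ hSmeas, measureReal_restrict_apply hSmeas,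
      inter_eq_self_of_subset_left hSsub, smul_eq_mul, measureReal_def]
    rfl
  rw [heq] at hmono
  linarith [hmono]

include hRQ hQpos hb hQ0 hR0 hqQ hf0 hfc hfd hφM hM0 in
lemma loss_le {t : ℝ} (ht : 0 < t) :
    (∫ x in box 0 1, Gfun Q p q t x * phi f x)
      ≤ t * M * (volume (Aset Q p q t ∩ Pset f)).toReal := by
  have hGcont := Gfun_cont hRQ hQpos hb hQ0 hR0 (q := q) t
  have hGint := bdd_mul_phi hGcont hfc hφM
  have hAP : MeasurableSet (Aset Q p q t ∩ Pset f) :=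
    (Aset_measurable hRQ hQpos hb hQ0 hR0 t).inter (Pset_measurable hfc)
  have h1 : (∫ x in box 0 1, Gfun Q p q t x * phi f x)
      ≤ ∫ x in box 0 1, ((Aset Q p q t ∩ Pset f).indicator (fun _ => t * M)) x := by
    refine integral_mono_ae hGint ((integrable_const _).indicator hAP) ?_
    filter_upwards [ae_mem_interior_box] with x hx
    have hxbox : x ∈ box 0 1 := interior_subset hx
    by_cases hf : 0 < f x
    · by_cases hgap : gp Q p q x < t
      · have hmem : x ∈ Aset Q p q t ∩ Pset f := ⟨⟨hxbox, hgap⟩, ⟨hxbox, hf⟩⟩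
        rw [indicator_of_mem hmem]
        have hG := Gfun_le_t ht.le (gap_nonneg hRQ hQpos hb hQ0 hqQ hxbox)
        have hGn := Gfun_nonneg (Q := Q) (p := p) (q := q) t x
        have hφ := hφM x hx
        calc Gfun Q p q t x * phi f x ≤ Gfun Q p q t x * M := by
              refine mul_le_mul_of_nonneg_left ?_ hGn
              exact le_trans (le_abs_self _) hφ
        _ ≤ t * M := mul_le_mul_of_nonneg_right hG hM0
      · rw [Gfun_zero (not_lt.1 hgap), zero_mul]
        exact indicator_nonneg (fun _ _ => by positivity) _
    · have hfx : f x = 0 := le_antisymm (not_lt.1 hf) (hf0 x)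
      rw [phi_eq_zero_of_f_zero hf0 hfd hx hfx, mul_zero]
      exact indicator_nonneg (fun _ _ => by positivity) _
  have heq : (∫ x in box 0 1, ((Aset Q p q t ∩ Pset f).indicator (fun _ => t * M)) x)
      = (volume (Aset Q p q t ∩ Pset f)).toReal * (t * M) := by
    rw [integral_indicator_const _ hAP, measureReal_restrict_apply hAP,
      inter_eq_self_of_subset_left (fun x hx => (mem_of_mem_inter_left hx).1),
      smul_eq_mul, measureReal_def]
  rw [heq] at h1
  linarith [h1]

include hRQ hQpos hb hQ0 hR0 hqQ hp0 hq0 hf0 hfc hfd hφM hM0 hc0 hc0pos in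
lemma main_ineq (hopt : Optimal 0 1 f Q p) {t : ℝ} (ht : 0 < t) :
    c0 * SS Q p q (t/2) ≤ 2 * M * (volume (Aset Q p q t ∩ Pset f)).toReal := by
  have h1 := opt_ineq hRQ hQpos hb hQ0 hR0 hqQ hp0 hq0 hfc hφM hopt ht.le
  have h2 : t / 2 * c0 * SS Q p q (t/2)
      ≤ ∑ n, ∫ y in box 0 1, Gfun Q p q t (Function.update y n 1) *
          f (Function.update y n 1) := by
    rw [SS, Finset.mul_sum]
    exact Finset.sum_le_sum fun n _ =>
      gain_ge hRQ hQpos hb hQ0 hR0 hqQ hf0 hfc hc0 hc0pos ht n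
  have h3 := loss_le hRQ hQpos hb hQ0 hR0 hqQ hf0 hfc hfd hφM hM0 (q := q) ht
  have h4 : t / 2 * (c0 * SS Q p q (t/2)) ≤ t / 2 * (2 * M *
      (volume (Aset Q p q t ∩ Pset f)).toReal) := by nlinarith [h2.trans (h1.trans h3)]
  exact le_of_mul_le_mul_left h4 (by linarith)

include hRQ hQpos hb hQ0 hR0 hfc in
lemma vanish (h0 : muF f (demandSet (box 0 1) Q p q) = 0) :
    Filter.Tendsto (fun k : ℕ => volume (Aset Q p q (1/(k+1)) ∩ Pset f))
      Filter.atTop (nhds 0) := by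
  set Dg : Set (Fin N → ℝ) := {x ∈ box 0 1 | gp Q p q x ≤ 0} with hDg
  have hgpmeas : MeasurableSet Dg := by
    have : Dg = box 0 1 ∩ (gp Q p q) ⁻¹' (Iic 0) := rfl
    rw [this]
    exact box_measurable.inter
      (((gp_cont hRQ hQpos hb hQ0 hR0).measurable) measurableSet_Iic)
  have hD0 : muF f Dg = 0 :=
    le_antisymm (h0 ▸ measure_mono (demand_superset hRQ hQpos hb)) (by simp)
  have hlint : (∫⁻ x in Dg, ENNReal.ofReal (f x)) = 0 := by
    rw [muF, withDensity_apply _ hgpmeas] at hD0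
    exact hD0
  have haem : AEMeasurable (fun x => ENNReal.ofReal (f x)) (volume.restrict Dg) := by
    refine AEMeasurable.ennreal_ofReal ?_
    exact (hfc.aemeasurable box_measurable).mono_measure
      (Measure.restrict_mono (fun x hx => hx.1) le_rfl)
  have hae : ∀ᵐ x ∂(volume.restrict Dg), ENNReal.ofReal (f x) = 0 := by
    filter_upwards [(lintegral_eq_zero_iff' haem).1 hlint] with x hx
    simpa using hx
  have hnull : volume ({x | 0 < f x} ∩ Dg) = 0 := by
    rw [← Measure.restrict_apply' hgpmeas]
    refine measure_mono_null ?_ hae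
    intro x hx
    simp only [mem_setOf_eq, mem_compl_iff]
    intro hcon
    rw [ENNReal.ofReal_eq_zero] at hcon
    exact absurd hx (not_lt.2 hcon)
  have hIm : ∀ k : ℕ, NullMeasurableSet (Aset Q p q (1/(k+1)) ∩ Pset f) volume :=
    fun k => ((Aset_measurable hRQ hQpos hb hQ0 hR0 _).inter
      (Pset_measurable hfc)).nullMeasurableSet
  have hanti : Antitone (fun k : ℕ => Aset Q p q (1/(k+1)) ∩ Pset f) := by
    intro k l hkl
    refine inter_subset_inter (fun x hx => ⟨hx.1, lt_of_lt_of_le hx.2 ?_⟩) le_rfl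
    refine one_div_le_one_div_of_le (by positivity) ?_
    have : (k:ℝ) ≤ l := Nat.cast_le.2 hkl
    linarith
  have hfin : ∃ k : ℕ, volume (Aset Q p q (1/(k+1)) ∩ Pset f) ≠ ⊤ := by
    refine ⟨0, ?_⟩
    refine ne_top_of_le_ne_top (by rw [volume_box]; exact ENNReal.one_ne_top)
      (measure_mono fun x hx => hx.1.1)
  have hInter : (⋂ k : ℕ, (Aset Q p q (1/(k+1)) ∩ Pset f)) = Dg ∩ Pset f := by
    ext x
    simp only [mem_iInter, mem_inter_iff]
    constructor
    · rintro h
      refine ⟨⟨(h 0).1.1, ?_⟩, (h 0).2⟩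
      by_contra hpos
      push_neg at hpos
      obtain ⟨k, hk⟩ := exists_nat_one_div_lt hpos
      exact absurd (h k).1.2 (not_lt.2 (by exact_mod_cast hk.le))
    · rintro ⟨⟨hx, hgp⟩, hP⟩ k
      exact ⟨⟨hx, lt_of_le_of_lt hgp (by positivity)⟩, hP⟩
  have htend := tendsto_measure_iInter_atTop hIm hanti hfin
  rw [hInter] at htend
  have : volume (Dg ∩ Pset f) = 0 := by
    refine measure_mono_null ?_ hnull
    intro x hx
    exact ⟨hx.2.2, hx.1⟩
  rwa [this] at htend

end GainLoss

section Geometry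
open Pointwise
variable {n0 : ℕ}

/-- minimal exit time along direction `v + κ·1`. -/
def tbar (v : Fin (n0+1) → ℝ) (κ : ℝ) (x : Fin (n0+1) → ℝ) : ℝ :=
  ⨅ n, (1 - x n) / (v n + κ)

lemma tbar_le (v : Fin (n0+1) → ℝ) (κ : ℝ) (x : Fin (n0+1) → ℝ) (n : Fin (n0+1)) :
    tbar v κ x ≤ (1 - x n) / (v n + κ) :=
  ciInf_le (Finite.bddBelow_range _) n

lemma le_tbar {v : Fin (n0+1) → ℝ} {κ : ℝ} {x : Fin (n0+1) → ℝ} {c : ℝ}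
    (h : ∀ n, c ≤ (1 - x n) / (v n + κ)) : c ≤ tbar v κ x := le_ciInf h

lemma box_coord_le {N' : ℕ} {x : Fin N' → ℝ} (hx : x ∈ box 0 1) (n : Fin N') :
    x n ≤ 1 := hx.2 n

lemma box_coord_nonneg {N' : ℕ} {x : Fin N' → ℝ} (hx : x ∈ box 0 1) (n : Fin N') :
    0 ≤ x n := hx.1 n

lemma tbar_nonneg {v : Fin (n0+1) → ℝ} {κ : ℝ} (hκ : 0 < κ) (hv0 : ∀ n, 0 ≤ v n)
    {x : Fin (n0+1) → ℝ} (hx : x ∈ box 0 1) : 0 ≤ tbar v κ x :=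
  le_tbar fun n => div_nonneg (by linarith [box_coord_le hx n]) (by linarith [hv0 n])

/-- `update y m 1` as `insertNth`. -/
lemma update_eq_insertNth (m : Fin (n0+1)) (y : Fin (n0+1) → ℝ) :
    Function.update y m 1 = m.insertNth 1 (fun j => y (m.succAbove j)) := by
  funext k
  refine Fin.succAboveCases m ?_ (fun j => ?_) k
  · rw [Function.update_self, Fin.insertNth_apply_same]
  · rw [Function.update_of_ne (Fin.succAbove_ne m j), Fin.insertNth_apply_succAbove]

/-- The cylinder measure is the measure of the trace on the face. -/
lemma cylM_eq_face (m : Fin (n0+1)) {A : Set (Fin (n0+1) → ℝ)} (hA : MeasurableSet A)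
    (hAbox : A ⊆ box 0 1) :
    cylM m A = volume {z : Fin n0 → ℝ | m.insertNth 1 z ∈ A} := by
  set e := MeasurableEquiv.piFinSuccAbove (fun _ : Fin (n0+1) => ℝ) m with he
  have hsymm : ∀ (c : ℝ) (z : Fin n0 → ℝ), e.symm (c, z) = m.insertNth c z :=
    fun _ _ => rfl
  set fs : Set (Fin n0 → ℝ) := {z | (m.insertNth 1 z : Fin (n0+1) → ℝ) ∈ A} with hfs
  have hfsm : MeasurableSet fs := by
    have hcont : Measurable fun z : Fin n0 → ℝ => e.symm ((1:ℝ), z) :=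
      e.symm.measurable.comp (measurable_const.prodMk measurable_id)
    have : fs = (fun z : Fin n0 → ℝ => e.symm ((1:ℝ), z)) ⁻¹' A := by
      ext z; simp only [hfs, mem_setOf_eq, mem_preimage, hsymm]
    rw [this]
    exact hcont hA
  have hset : {y ∈ box 0 1 | Function.update y m 1 ∈ A}
      = e ⁻¹' ((Icc (0:ℝ) 1) ×ˢ fs) := by
    ext y
    have hy' : Function.update y m 1 = m.insertNth 1 (fun j => y (m.succAbove j)) :=
      update_eq_insertNth m y
    have h1 : (e y).1 = y m := rfl
    have h2 : (e y).2 = fun j => y (m.succAbove j) := rfl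
    simp only [mem_setOf_eq, mem_preimage, mem_prod, h1, h2]
    constructor
    · rintro ⟨hybox, hyA⟩
      refine ⟨⟨hybox.1 m, hybox.2 m⟩, ?_⟩
      show (m.insertNth 1 (fun j => y (m.succAbove j)) : Fin (n0+1) → ℝ) ∈ A
      rw [← hy']; exact hyA
    · rintro ⟨hm, hz⟩
      have hz' : (m.insertNth 1 (fun j => y (m.succAbove j)) : Fin (n0+1) → ℝ) ∈ A := hz
      rw [← hy'] at hz'
      have hybox : y ∈ box 0 1 := by
        have hub := hAbox hz'
        constructor <;> intro k
        · refine Fin.succAboveCases m (by exact hm.1) (fun j => ?_) k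
          have := hub.1 (m.succAbove j)
          rwa [Function.update_of_ne (Fin.succAbove_ne m j)] at this
        · refine Fin.succAboveCases m (by exact hm.2) (fun j => ?_) k
          have := hub.2 (m.succAbove j)
          rwa [Function.update_of_ne (Fin.succAbove_ne m j)] at this
      exact ⟨hybox, hz'⟩
  rw [cylM, hset]
  rw [(volume_preserving_piFinSuccAbove (fun _ : Fin (n0+1) => ℝ) m).measure_preimage
    ((measurableSet_Icc.prod hfsm).nullMeasurableSet)]
  rw [Measure.volume_eq_prod, Measure.prod_prod, Real.volume_Icc]
  norm_num




lemma cap_bound {v : Fin (n0+1) → ℝ} {κ : ℝ} (hκ : 0 < κ) (hv0 : ∀ n, 0 ≤ v n)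
    {A : Set (Fin (n0+1) → ℝ)} (hA : MeasurableSet A) (hAbox : A ⊆ box 0 1)
    {x : Fin (n0+1) → ℝ} (hx : x ∈ A)
    (habs : ∀ (s : ℝ) (d : Fin (n0+1) → ℝ), 0 ≤ s → (∀ n, d n ∈ Icc (κ/2) κ) →
      x + s • (v + d) ∈ box 0 1 → x + s • (v + d) ∈ A) :
    ∃ m, ENNReal.ofReal ((κ/2)^(n0+1) / (2*((n0:ℝ)+1)*κ) * tbar v κ x ^ n0)
      ≤ cylM m A := by
  have hxbox : x ∈ box 0 1 := hAbox hx
  set cR : ℝ := (κ/2)^(n0+1) with hcR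
  have hcRpos : 0 < cR := by positivity
  set Tq : Fin (n0+1) → (Fin (n0+1) → ℝ) → ℝ :=
    fun n u => (1 - x n) / (v n + u n) with hTq
  set U : Set (Fin (n0+1) → ℝ) := univ.pi fun _ => Ioo (κ/2) κ with hU
  set Vm : Fin (n0+1) → Set (Fin (n0+1) → ℝ) :=
    fun m => U ∩ {u | ∀ n, Tq m u ≤ Tq n u} with hVm
  have hUmeas : MeasurableSet U := MeasurableSet.univ_pi fun _ => measurableSet_Ioo
  have hTmeas : ∀ n, Measurable (Tq n) := fun n =>
    measurable_const.div (measurable_const.add (measurable_pi_apply n))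
  have hVmeas : ∀ m, MeasurableSet (Vm m) := by
    intro m
    refine hUmeas.inter ?_
    have h1 : {u : Fin (n0+1) → ℝ | ∀ n, Tq m u ≤ Tq n u}
        = ⋂ n, {u | Tq m u ≤ Tq n u} := by ext u; simp
    rw [h1]
    exact MeasurableSet.iInter fun n => measurableSet_le (hTmeas m) (hTmeas n)
  have hvolU : volume U = ENNReal.ofReal cR := by
    rw [hU, volume_pi_pi]
    simp only [Real.volume_Ioo]
    rw [Finset.prod_const, ← ENNReal.ofReal_pow (by linarith)]
    rw [Finset.card_univ, Fintype.card_fin]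
    congr 2
    ring
  have hUsub : U ⊆ ⋃ m, Vm m := by
    intro u hu
    obtain ⟨m, -, hm⟩ := Finset.exists_min_image Finset.univ (fun n => Tq n u)
      ⟨0, Finset.mem_univ 0⟩
    exact mem_iUnion.2 ⟨m, hu, fun n => hm n (Finset.mem_univ n)⟩
  obtain ⟨m, -, hmmax⟩ := Finset.exists_max_image Finset.univ (fun m => volume (Vm m))
    ⟨0, Finset.mem_univ 0⟩
  have hsum : ENNReal.ofReal cR ≤ ((n0:ENNReal)+1) * volume (Vm m) := by
    calc ENNReal.ofReal cR = volume U := hvolU.symm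
    _ ≤ volume (⋃ m', Vm m') := measure_mono hUsub
    _ ≤ ∑ m', volume (Vm m') := measure_iUnion_fintype_le _ _
    _ ≤ ∑ _m' : Fin (n0+1), volume (Vm m) :=
        Finset.sum_le_sum fun m' _ => hmmax m' (Finset.mem_univ m')
    _ = ((n0:ENNReal)+1) * volume (Vm m) := by
        rw [Finset.sum_const, Finset.card_univ, Fintype.card_fin, nsmul_eq_mul]
        norm_cast
  have hVlow : ENNReal.ofReal (cR/((n0:ℝ)+1)) ≤ volume (Vm m) := by
    rw [ENNReal.ofReal_div_of_pos (by positivity)]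
    refine ENNReal.div_le_of_le_mul ?_
    have hcast : ENNReal.ofReal ((n0:ℝ)+1) = ((n0:ENNReal)+1) := by
      rw [ENNReal.ofReal_add (by positivity) zero_le_one]
      simp [ENNReal.ofReal_natCast]
    rw [hcast, mul_comm]
    exact hsum
  set e := MeasurableEquiv.piFinSuccAbove (fun _ : Fin (n0+1) => ℝ) m with he
  have hsymm : ∀ (c : ℝ) (z : Fin n0 → ℝ), e.symm (c, z) = m.insertNth c z :=
    fun _ _ => rfl
  set S : Set (ℝ × (Fin n0 → ℝ)) := e.symm ⁻¹' (Vm m) with hS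
  have hSmeas : MeasurableSet S := e.symm.measurable (hVmeas m)
  have hvolVm : volume (Vm m) = ∫⁻ c, volume {z | (c, z) ∈ S} := by
    have h1 : Vm m = e ⁻¹' S := by
      rw [hS]
      ext u
      simp only [mem_preimage, MeasurableEquiv.symm_apply_apply]
    rw [h1, (volume_preserving_piFinSuccAbove (fun _ : Fin (n0+1) => ℝ) m).measure_preimage
      hSmeas.nullMeasurableSet, Measure.volume_eq_prod, Measure.prod_apply hSmeas]
    rfl
  have hmemS : ∀ (c : ℝ) (z : Fin n0 → ℝ), ((c, z) ∈ S ↔ (m.insertNth c z : Fin (n0+1) → ℝ) ∈ Vm m) := by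
    intro c z
    rw [hS, mem_preimage, hsymm]
  have hgood : ∃ c ∈ Ioo (κ/2) κ,
      ENNReal.ofReal (cR/(2*((n0:ℝ)+1)*κ)) ≤ volume {z | (c,z) ∈ S} := by
    by_contra hcon
    push_neg at hcon
    have hslice0 : ∀ c : ℝ, c ∉ Ioo (κ/2) κ → volume {z : Fin n0 → ℝ | (c,z) ∈ S} = 0 := by
      intro c hc
      have : {z : Fin n0 → ℝ | (c,z) ∈ S} = ∅ := by
        ext z
        simp only [mem_setOf_eq, mem_empty_iff_false, iff_false]
        intro hzS
        rw [hmemS] at hzS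
        have := hzS.1 m (mem_univ m)
        rw [Fin.insertNth_apply_same] at this
        exact hc this
      rw [this, measure_empty]
    have hb : volume (Vm m) ≤ ENNReal.ofReal (cR/(2*((n0:ℝ)+1)*κ)) * ENNReal.ofReal (κ/2) := by
      rw [hvolVm]
      calc ∫⁻ c, volume {z | (c, z) ∈ S}
          ≤ ∫⁻ c, (Ioo (κ/2) κ).indicator
            (fun _ => ENNReal.ofReal (cR/(2*((n0:ℝ)+1)*κ))) c := by
            refine lintegral_mono fun c => ?_
            by_cases hc : c ∈ Ioo (κ/2) κ
            · rw [indicator_of_mem hc]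
              exact (hcon c hc).le
            · rw [indicator_of_notMem hc, hslice0 c hc]
      _ = ENNReal.ofReal (cR/(2*((n0:ℝ)+1)*κ)) * ENNReal.ofReal (κ/2) := by
            rw [lintegral_indicator measurableSet_Ioo, setLIntegral_const, Real.volume_Ioo]
            congr 2
            ring
    have hlt : ENNReal.ofReal (cR/(2*((n0:ℝ)+1)*κ)) * ENNReal.ofReal (κ/2)
        < ENNReal.ofReal (cR/((n0:ℝ)+1)) := by
      rw [← ENNReal.ofReal_mul (by positivity)]
      refine ENNReal.ofReal_lt_ofReal_iff (by positivity) |>.2 ?_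
      have heqq : cR/(2*((n0:ℝ)+1)*κ) * (κ/2) = cR/(4*((n0:ℝ)+1)) := by
        field_simp
        ring
      rw [heqq]
      refine div_lt_div_of_pos_left hcRpos (by positivity) (by linarith)
    exact absurd hVlow (not_le.2 (lt_of_le_of_lt hb hlt))
  obtain ⟨c, hcIoo, hslice⟩ := hgood
  set T0 : ℝ := (1 - x m) / (v m + c) with hT0def
  have hvc : 0 < v m + c := by have := hv0 m; have := hcIoo.1; linarith
  have hT0 : 0 ≤ T0 := div_nonneg (by linarith [box_coord_le hxbox m]) hvc.le
  have htb : tbar v κ x ≤ T0 := by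
    refine le_trans (tbar_le v κ x m) ?_
    exact div_le_div_of_nonneg_left (by linarith [box_coord_le hxbox m]) hvc
      (by linarith [hcIoo.2])
  set base : Fin n0 → ℝ := fun j => x (m.succAbove j) + T0 * v (m.succAbove j) with hbase
  set slice : Set (Fin n0 → ℝ) := {z | (c, z) ∈ S} with hslicedef
  have hsub : (fun z => base + T0 • z) '' slice
      ⊆ {z : Fin n0 → ℝ | (m.insertNth 1 z : Fin (n0+1) → ℝ) ∈ A} := by
    rintro _ ⟨z, hz, rfl⟩
    have hu : (m.insertNth c z : Fin (n0+1) → ℝ) ∈ Vm m := (hmemS c z).1 hz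
    set u : Fin (n0+1) → ℝ := m.insertNth c z with hudef
    have huIoo : ∀ n, u n ∈ Ioo (κ/2) κ := fun n => hu.1 n (mem_univ n)
    have hum : u m = c := by rw [hudef]; simp
    set y : Fin (n0+1) → ℝ := x + T0 • (v + u) with hy
    have hym : y m = 1 := by
      show x m + T0 * (v m + u m) = 1
      rw [hum, hT0def, div_mul_cancel₀ _ (ne_of_gt hvc)]
      ring
    have hyk : ∀ j, y (m.succAbove j) = base j + T0 * z j := by
      intro j
      show x (m.succAbove j) + T0 * (v (m.succAbove j) + u (m.succAbove j)) = _
      rw [hudef, Fin.insertNth_apply_succAbove, hbase]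
      ring
    have hTqm : Tq m u = T0 := by
      rw [hTq]
      simp only [hum, hT0def]
    have hybox : y ∈ box 0 1 := by
      constructor <;> intro n
      · show (0:ℝ) ≤ x n + T0 * (v n + u n)
        have h1 := box_coord_nonneg hxbox n
        have h2 : 0 < v n + u n := by have := hv0 n; have := (huIoo n).1; linarith
        nlinarith
      · show x n + T0 * (v n + u n) ≤ 1
        have h2 : 0 < v n + u n := by have := hv0 n; have := (huIoo n).1; linarith
        have h3 : T0 ≤ (1 - x n) / (v n + u n) := by rw [← hTqm]; exact hu.2 n
        have h4 : T0 * (v n + u n) ≤ 1 - x n := by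
          rw [← le_div_iff₀ h2]
          exact h3
        linarith
    have hyA : y ∈ A := habs T0 u hT0
      (fun n => ⟨(huIoo n).1.le, (huIoo n).2.le⟩) hybox
    show (m.insertNth 1 (base + T0 • z) : Fin (n0+1) → ℝ) ∈ A
    have heqy : (m.insertNth 1 (base + T0 • z) : Fin (n0+1) → ℝ) = y := by
      funext k
      refine Fin.succAboveCases m ?_ (fun j => ?_) k
      · rw [Fin.insertNth_apply_same, hym]
      · rw [Fin.insertNth_apply_succAbove, hyk j]
        simp
    rw [heqy]
    exact hyA
  have himg : volume ((fun z => base + T0 • z) '' slice)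
      = ENNReal.ofReal (T0^n0) * volume slice := by
    have h1 : (fun z : Fin n0 → ℝ => base + T0 • z) '' slice = base +ᵥ (T0 • slice) := by
      have h2 : (fun z : Fin n0 → ℝ => base + T0 • z)
          = (fun w => base +ᵥ w) ∘ (fun z : Fin n0 → ℝ => T0 • z) := rfl
      rw [h2, image_comp, image_smul, image_vadd]
    rw [h1, measure_vadd, Measure.addHaar_smul, Module.finrank_pi, Fintype.card_fin,
      abs_of_nonneg (pow_nonneg hT0 _)]
  refine ⟨m, ?_⟩
  rw [cylM_eq_face m hA hAbox]
  calc ENNReal.ofReal (cR / (2*((n0:ℝ)+1)*κ) * tbar v κ x ^ n0)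
      ≤ ENNReal.ofReal (T0^n0 * (cR/(2*((n0:ℝ)+1)*κ))) := by
        refine ENNReal.ofReal_le_ofReal ?_
        have hple : tbar v κ x ^ n0 ≤ T0 ^ n0 :=
          pow_le_pow_left₀ (tbar_nonneg hκ hv0 hxbox) htb n0
        have hcc : (0:ℝ) ≤ cR/(2*((n0:ℝ)+1)*κ) := by positivity
        nlinarith [hple, hcc, pow_nonneg (tbar_nonneg hκ hv0 hxbox) n0]
    _ = ENNReal.ofReal (T0^n0) * ENNReal.ofReal (cR/(2*((n0:ℝ)+1)*κ)) :=
        ENNReal.ofReal_mul (pow_nonneg hT0 _)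
    _ ≤ ENNReal.ofReal (T0^n0) * volume slice := mul_le_mul_right hslice _
    _ = volume ((fun z => base + T0 • z) '' slice) := himg.symm
    _ ≤ volume {z : Fin n0 → ℝ | (m.insertNth 1 z : Fin (n0+1) → ℝ) ∈ A} :=
        measure_mono hsub




lemma cover_bound {v : Fin (n0+1) → ℝ} {κ : ℝ} (hκ : 0 < κ) (hv0 : ∀ n, 0 ≤ v n)
    (hv1 : ∀ n, v n ≤ 1) {A : Set (Fin (n0+1) → ℝ)} (hA : MeasurableSet A)
    (hAbox : A ⊆ box 0 1)
    (habs : ∀ x ∈ A, ∀ (s : ℝ), 0 ≤ s → x + s • (v + fun _ => κ) ∈ box 0 1 →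
        x + s • (v + fun _ => κ) ∈ A)
    {T : ℝ} (hT : 0 ≤ T) (htb : ∀ x ∈ A, tbar v κ x ≤ T) :
    volume A ≤ ENNReal.ofReal ((1+κ)*T) * ∑ m, cylM m A := by
  classical
  have hwpos : ∀ n, 0 < v n + κ := fun n => by have := hv0 n; linarith
  set Sm : Fin (n0+1) → Set (ℝ × (Fin n0 → ℝ)) := fun m =>
    {cz | cz.1 ∈ Icc (1 - T*(v m + κ)) 1 ∧
      (m.insertNth 1 (cz.2 + ((1 - cz.1)/(v m + κ)) •
        (fun j => v (m.succAbove j) + κ)) : Fin (n0+1) → ℝ) ∈ A} with hSm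
  have hmap : ∀ m : Fin (n0+1), Measurable (fun cz : ℝ × (Fin n0 → ℝ) =>
      (m.insertNth 1 (cz.2 + ((1 - cz.1)/(v m + κ)) •
        (fun j => v (m.succAbove j) + κ)) : Fin (n0+1) → ℝ)) := by
    intro m
    set e := MeasurableEquiv.piFinSuccAbove (fun _ : Fin (n0+1) => ℝ) m with he
    have h1 : (fun cz : ℝ × (Fin n0 → ℝ) =>
        (m.insertNth 1 (cz.2 + ((1 - cz.1)/(v m + κ)) •
          (fun j => v (m.succAbove j) + κ)) : Fin (n0+1) → ℝ))
        = (fun w : ℝ × (Fin n0 → ℝ) => e.symm w) ∘ (fun cz => ((1:ℝ),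
          cz.2 + ((1 - cz.1)/(v m + κ)) • (fun j => v (m.succAbove j) + κ))) := rfl
    rw [h1]
    refine e.symm.measurable.comp (measurable_const.prodMk ?_)
    refine measurable_snd.add ?_
    exact ((measurable_const.sub measurable_fst).div_const _).smul_const _
  have hSmeas : ∀ m, MeasurableSet (Sm m) := by
    intro m
    refine MeasurableSet.inter ?_ ((hmap m) hA)
    exact measurable_fst measurableSet_Icc
  have hcover : A ⊆ ⋃ m, (MeasurableEquiv.piFinSuccAbove (fun _ : Fin (n0+1) => ℝ) m)
      ⁻¹' (Sm m) := by
    intro x hxA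
    have hxbox : x ∈ box 0 1 := hAbox hxA
    set s : ℝ := tbar v κ x with hs
    have hs0 : 0 ≤ s := tbar_nonneg hκ hv0 hxbox
    obtain ⟨m, -, hm⟩ := Finset.exists_min_image Finset.univ
      (fun n => (1 - x n) / (v n + κ)) ⟨0, Finset.mem_univ 0⟩
    have hsm : s = (1 - x m) / (v m + κ) := by
      refine le_antisymm (tbar_le v κ x m) (le_tbar fun n => hm n (Finset.mem_univ n))
    have hsmul : s * (v m + κ) = 1 - x m := by
      rw [hsm, div_mul_cancel₀ _ (ne_of_gt (hwpos m))]
    set y : Fin (n0+1) → ℝ := x + s • (v + fun _ => κ) with hy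
    have hyn : ∀ n, y n = x n + s * (v n + κ) := fun n => rfl
    have hybox : y ∈ box 0 1 := by
      constructor <;> intro n <;> rw [hyn n]
      · show (0:ℝ) ≤ x n + s * (v n + κ)
        have := box_coord_nonneg hxbox n
        nlinarith [hwpos n]
      · show x n + s * (v n + κ) ≤ 1
        have h3 : s ≤ (1 - x n) / (v n + κ) := tbar_le v κ x n
        have h4 : s * (v n + κ) ≤ 1 - x n := by
          rw [← le_div_iff₀ (hwpos n)]
          exact h3
        linarith
    have hyA : y ∈ A := habs x hxA s hs0 hybox
    refine mem_iUnion.2 ⟨m, ?_⟩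
    simp only [mem_preimage]
    constructor
    · constructor
      · show 1 - T*(v m + κ) ≤ x m
        have h5 : s * (v m + κ) ≤ T * (v m + κ) :=
          mul_le_mul_of_nonneg_right (htb x hxA) (hwpos m).le
        linarith [hsmul]
      · exact box_coord_le hxbox m
    · have hq : (1 - x m)/(v m + κ) = s := by rw [hsm]
      show (m.insertNth 1 ((fun j => x (m.succAbove j)) + ((1 - x m)/(v m + κ)) •
        (fun j => v (m.succAbove j) + κ)) : Fin (n0+1) → ℝ) ∈ A
      have heqy : (m.insertNth 1 ((fun j => x (m.succAbove j)) + ((1 - x m)/(v m + κ)) •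
          (fun j => v (m.succAbove j) + κ)) : Fin (n0+1) → ℝ) = y := by
        funext k
        refine Fin.succAboveCases m ?_ (fun j => ?_) k
        · rw [Fin.insertNth_apply_same]
          rw [hyn m, hsmul]; ring
        · rw [Fin.insertNth_apply_succAbove]
          rw [hyn (m.succAbove j), hq]
          simp
      rw [heqy]
      exact hyA
  have hbound : ∀ m : Fin (n0+1),
      volume ((MeasurableEquiv.piFinSuccAbove (fun _ : Fin (n0+1) => ℝ) m) ⁻¹' (Sm m))
      ≤ ENNReal.ofReal ((1+κ)*T) * cylM m A := by
    intro m
    set e := MeasurableEquiv.piFinSuccAbove (fun _ : Fin (n0+1) => ℝ) m with he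
    set fs : Set (Fin n0 → ℝ) := {z | (m.insertNth 1 z : Fin (n0+1) → ℝ) ∈ A} with hfs
    rw [(volume_preserving_piFinSuccAbove (fun _ : Fin (n0+1) => ℝ) m).measure_preimage
      (hSmeas m).nullMeasurableSet, Measure.volume_eq_prod, Measure.prod_apply (hSmeas m)]
    have hsl : ∀ c : ℝ, volume (Prod.mk c ⁻¹' (Sm m))
        ≤ (Icc (1 - T*(v m + κ)) 1).indicator (fun _ => volume fs) c := by
      intro c
      by_cases hc : c ∈ Icc (1 - T*(v m + κ)) 1
      · rw [indicator_of_mem hc]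
        have h1 : Prod.mk c ⁻¹' (Sm m) ⊆ (fun z : Fin n0 → ℝ =>
            z + ((1 - c)/(v m + κ)) • (fun j => v (m.succAbove j) + κ)) ⁻¹' fs := by
          intro z hz
          exact hz.2
        refine le_trans (measure_mono h1) ?_
        rw [measure_preimage_add_right]
      · have h2 : Prod.mk c ⁻¹' (Sm m) = ∅ := by
          ext z
          simp only [mem_preimage, mem_empty_iff_false, iff_false]
          intro hzz
          exact hc hzz.1
        rw [indicator_of_notMem hc, h2, measure_empty]
    calc (∫⁻ c, volume (Prod.mk c ⁻¹' (Sm m)))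
        ≤ ∫⁻ c, (Icc (1 - T*(v m + κ)) 1).indicator (fun _ => volume fs) c :=
          lintegral_mono hsl
      _ = volume fs * volume (Icc (1 - T*(v m + κ)) 1) := by
          rw [lintegral_indicator measurableSet_Icc, setLIntegral_const]
      _ ≤ ENNReal.ofReal ((1+κ)*T) * cylM m A := by
          rw [Real.volume_Icc, cylM_eq_face m hA hAbox, ← hfs, mul_comm]
          refine mul_le_mul_left (ENNReal.ofReal_le_ofReal ?_) _
          have := hv1 m
          have := hwpos m
          nlinarith [hT]
  calc volume A ≤ volume (⋃ m, (MeasurableEquiv.piFinSuccAbove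
        (fun _ : Fin (n0+1) => ℝ) m) ⁻¹' (Sm m)) := measure_mono hcover
    _ ≤ ∑ m, volume ((MeasurableEquiv.piFinSuccAbove
        (fun _ : Fin (n0+1) => ℝ) m) ⁻¹' (Sm m)) := measure_iUnion_fintype_le _ _
    _ ≤ ∑ m : Fin (n0+1), ENNReal.ofReal ((1+κ)*T) * cylM m A :=
        Finset.sum_le_sum fun m _ => hbound m
    _ = ENNReal.ofReal ((1+κ)*T) * ∑ m, cylM m A := by rw [Finset.mul_sum]



end Geometry

end AuxProof

set_option maxHeartbeats 2000000 in
/-- Theorem 3, `X = [0,1]^N`: at an optimal feasible price schedule, if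
`q ∈ ∂𝒬` and some unit vector `v` of the nonnegative orthant lies in the interior of
the outward normal cone `NC(q)`, then `q` is pooling: `D(q)` has positive measure
under `f(x)dx`. -/
theorem pooling_bundles
    (hN : 0 < N)
    (f : (Fin N → ℝ) → ℝ) (hf : DensityHyp 0 1 f)
    (Q : Set (Fin N → ℝ)) (hQ : QHyp Q)
    (p : (Fin N → ℝ) → ℝ) (hopt : Optimal 0 1 f Q p)
    (q : Fin N → ℝ) (hq : q ∈ frontier Q)
    (v : Fin N → ℝ) (hv1 : ‖v‖ = 1) (hvpos : ∀ n, 0 ≤ v n)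
    (hvint : v ∈ interior (NC Q q)) :
    muF f (demandSet (box 0 1) Q p q) ≠ 0 := by
  intro h0
  obtain ⟨hf0, hf1, hfc, hfd, hfb, M, hφM⟩ := hf
  obtain ⟨hQconv, hQc, hQpos, hQint, hQ0⟩ := hQ
  have hb : BddBelow (p '' Q) := hopt.1.1
  have hp0 : p 0 = 0 := hopt.1.2
  obtain ⟨R, hRpos, hRQ⟩ := exists_R hQc hQ0
  have hR0 : 0 ≤ R := hRpos.le
  obtain ⟨ε, hε, hball⟩ : ∃ ε > 0, ∀ w, ‖w - v‖ < ε → w ∈ NC Q q := by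
    obtain ⟨δ, hδ, hsub⟩ := Metric.mem_nhds_iff.1 (mem_interior_iff_mem_nhds.1 hvint)
    exact ⟨δ, hδ, fun w hw => hsub (by rwa [Metric.mem_ball, dist_eq_norm])⟩
  set κ : ℝ := ε/2 with hκdef
  have hκ : 0 < κ := by positivity
  have hqQ : q ∈ Q := by
    have h1 : q ∈ closure Q := frontier_subset_closure hq
    rwa [hQc.isClosed.closure_eq] at h1
  have hq0 : q ≠ 0 := q_ne_zero hRQ hQpos hε hball hQint hv1 hvpos
  obtain ⟨c0, hc0pos, hc0⟩ := exists_c0 hfc hfb hN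
  have hM0 : 0 ≤ M := by
    have hne : (interior (box 0 1 : Set (Fin N → ℝ))).Nonempty := by
      refine nonempty_of_measure_ne_zero (μ := (volume : Measure (Fin N → ℝ))) ?_
      rw [volume_interior_box]; simp
    obtain ⟨z, hz⟩ := hne
    exact le_trans (abs_nonneg _) (hφM z hz)
  have hv1' : ∀ n, v n ≤ 1 := by
    intro n
    refine le_trans (le_abs_self _) ?_
    rw [← Real.norm_eq_abs, ← hv1]
    exact norm_le_pi_norm v n
  have habs : ∀ t : ℝ, ∀ x ∈ Aset Q p q t, ∀ (s : ℝ) (d : Fin N → ℝ), 0 ≤ s →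
      (∀ n, d n ∈ Icc (κ/2) κ) → x + s • (v + d) ∈ box 0 1 →
      x + s • (v + d) ∈ Aset Q p q t := by
    intro t x hx s d hs hd hbox'
    have hdnorm : ‖d‖ < ε := by
      have h1 : ‖d‖ ≤ κ := by
        refine (pi_norm_le_iff_of_nonneg hκ.le).2 fun n => ?_
        have h2 := hd n
        rw [Real.norm_eq_abs, abs_le]
        refine ⟨by linarith [h2.1], h2.2⟩
      rw [hκdef] at h1
      linarith
    exact ⟨hbox', lt_of_le_of_lt
      (gap_absorb hRQ hQpos hb hQ0 hqQ hball hx.1 hs hdnorm hbox') hx.2⟩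
  obtain ⟨xstar, hxstar_box, hxstar⟩ := envelope_attain hRQ hQpos hb hQ0 hR0 q
  have hgap0 : gp Q p q xstar = 0 := by unfold gp; linarith [hxstar]
  have hgp_lip : ∀ x y : Fin N → ℝ, gp Q p q x ≤ gp Q p q y + (2*R) * ‖x - y‖ := by
    intro x y
    have h1 := indirect_lip hRQ hQpos hb hQ0 hR0 x y
    have h2 : |dot (y - x) q| ≤ ‖y - x‖ * R := abs_dot_le (hQpos q hqQ) (hRQ q hqQ)
    rw [dot_sub_left] at h2
    have h3 : ‖y - x‖ = ‖x - y‖ := norm_sub_rev y x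
    have h4 := (abs_le.1 h2).2
    have h5 := (abs_le.1 h2).1
    unfold gp
    rw [h3] at h4 h5
    nlinarith [norm_nonneg (x - y)]
  set Λ : ℝ := 2*R + 1 with hΛ
  have hΛpos : 0 < Λ := by positivity
  obtain ⟨n0, rfl⟩ : ∃ n0, N = n0 + 1 := ⟨N - 1, (Nat.succ_pred_eq_of_pos hN).symm⟩
  have hAmeas : ∀ t, MeasurableSet (Aset Q p q t) :=
    fun t => Aset_measurable hRQ hQpos hb hQ0 hR0 t
  have hAboxx : ∀ t : ℝ, Aset Q p q t ⊆ box 0 1 := fun t => Aset_subset_box t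
  have hcyl_fin : ∀ (m : Fin (n0+1)) (t : ℝ), cylM m (Aset Q p q t) ≠ ⊤ := by
    intro m t
    have hbv : (volume (box 0 1 : Set (Fin (n0+1) → ℝ))) ≠ ⊤ := by
      rw [volume_box]; exact ENNReal.one_ne_top
    exact ne_top_of_le_ne_top hbv (measure_mono fun y hy => hy.1)
  have hSS_nonneg : ∀ t, 0 ≤ SS Q p q t :=
    fun t => Finset.sum_nonneg fun m _ => ENNReal.toReal_nonneg
  have hSS_mono : ∀ s t : ℝ, s ≤ t → SS Q p q s ≤ SS Q p q t := by
    intro s t hst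
    refine Finset.sum_le_sum fun m _ => ?_
    refine ENNReal.toReal_mono (hcyl_fin m t) ?_
    exact measure_mono fun y hy => ⟨hy.1, ⟨hy.2.1, lt_of_lt_of_le hy.2.2 hst⟩⟩
  have hF1 : ∀ t : ℝ, 0 < t → c0 * SS Q p q (t/2)
      ≤ 2 * M * (volume (Aset Q p q t ∩ Pset f)).toReal :=
    fun t ht => main_ineq hRQ hQpos hb hQ0 hR0 hqQ hp0 hq0 hf0 hfc hfd hφM hM0
      hc0 hc0pos hopt ht
  set ccap : ℝ := (κ/2)^(n0+1) / (2*((n0:ℝ)+1)*κ) with hccap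
  have hccap_pos : 0 < ccap := by positivity
  have hcapR : ∀ (t : ℝ) (x), x ∈ Aset Q p q t →
      ccap * tbar v κ x ^ n0 ≤ SS Q p q t := by
    intro t x hx
    obtain ⟨m, hm⟩ := cap_bound hκ hvpos (hAmeas t) (hAboxx t) hx
      (fun s d hs hd hb' => habs t x hx s d hs hd hb')
    have hnn : 0 ≤ ccap * tbar v κ x ^ n0 :=
      mul_nonneg hccap_pos.le (pow_nonneg (tbar_nonneg hκ hvpos hx.1) _)
    have h3 : ccap * tbar v κ x ^ n0 ≤ (cylM m (Aset Q p q t)).toReal := by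
      have h4 := ENNReal.toReal_mono (hcyl_fin m t) hm
      rwa [ENNReal.toReal_ofReal hnn] at h4
    refine le_trans h3 ?_
    exact Finset.single_le_sum (f := fun m' => (cylM m' (Aset Q p q t)).toReal)
      (fun i _ => ENNReal.toReal_nonneg) (Finset.mem_univ m)
  have hlow : ∀ s : ℝ, 0 < s → s ≤ Λ →
      ccap * (s/(2*Λ*(1+κ)))^n0 ≤ SS Q p q s := by
    intro s hs hsΛ
    set ρ : ℝ := s/(2*Λ) with hρ
    have hρpos : 0 < ρ := by positivity
    have hρhalf : ρ ≤ 1/2 := by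
      rw [hρ, div_le_div_iff₀ (by positivity) (by norm_num)]
      linarith
    set x' : Fin (n0+1) → ℝ := fun n => min (xstar n) (1 - ρ) with hx'
    have hx'box : x' ∈ box 0 1 := by
      constructor <;> intro n
      · show (0:ℝ) ≤ min (xstar n) (1 - ρ)
        exact le_min (box_coord_nonneg hxstar_box n) (by linarith)
      · show min (xstar n) (1 - ρ) ≤ 1
        exact le_trans (min_le_left _ _) (box_coord_le hxstar_box n)
    have hdist : ‖x' - xstar‖ ≤ ρ := by
      refine (pi_norm_le_iff_of_nonneg hρpos.le).2 fun n => ?_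
      have h1 := box_coord_le hxstar_box n
      have h2 := box_coord_nonneg hxstar_box n
      have h3 : min (xstar n) (1 - ρ) ≥ xstar n - ρ := le_min (by linarith) (by linarith)
      have h4 : min (xstar n) (1 - ρ) ≤ xstar n := min_le_left _ _
      rw [Real.norm_eq_abs, abs_le]
      constructor
      · show -ρ ≤ (x' - xstar) n
        have : (x' - xstar) n = min (xstar n) (1 - ρ) - xstar n := rfl
        rw [this]; linarith
      · show (x' - xstar) n ≤ ρ
        have : (x' - xstar) n = min (xstar n) (1 - ρ) - xstar n := rfl
        rw [this]; linarith
    have hgapx' : gp Q p q x' < s := by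
      have h1 := hgp_lip x' xstar
      rw [hgap0] at h1
      have h2 : (2*R) * ‖x' - xstar‖ ≤ (2*R) * ρ :=
        mul_le_mul_of_nonneg_left hdist (by linarith)
      have h3 : (2*R) * ρ < s := by
        rw [hρ, mul_div_assoc']
        rw [div_lt_iff₀ (by positivity)]
        nlinarith
      linarith
    have hx'A : x' ∈ Aset Q p q s := ⟨hx'box, hgapx'⟩
    have htbx' : ρ/(1+κ) ≤ tbar v κ x' := by
      refine le_tbar fun n => ?_
      have h1 : ρ ≤ 1 - x' n := by
        have h2 : x' n ≤ 1 - ρ := min_le_right _ _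
        linarith
      refine div_le_div₀ (by linarith) h1 (by linarith [hvpos n]) (by linarith [hv1' n])
    have hfinal := hcapR s x' hx'A
    have hpow : (ρ/(1+κ))^n0 ≤ tbar v κ x' ^ n0 :=
      pow_le_pow_left₀ (by positivity) htbx' n0
    have heq2 : s/(2*Λ*(1+κ)) = ρ/(1+κ) := by
      rw [hρ, div_div]
    rw [heq2]
    nlinarith [hpow, hccap_pos]
  have hupper : ∀ t : ℝ, ∀ T : ℝ, 0 ≤ T → (∀ x ∈ Aset Q p q t, tbar v κ x ≤ T) →
      (volume (Aset Q p q t ∩ Pset f)).toReal ≤ (1+κ)*T * SS Q p q t := by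
    intro t T hT htbT
    have habs' : ∀ x ∈ Aset Q p q t, ∀ (s : ℝ), 0 ≤ s →
        x + s • (v + fun _ => κ) ∈ box 0 1 →
        x + s • (v + fun _ => κ) ∈ Aset Q p q t :=
      fun x hx s hs hbx =>
        habs t x hx s (fun _ => κ) hs (fun n => ⟨by linarith, le_rfl⟩) hbx
    have h1 := cover_bound hκ hvpos hv1' (hAmeas t) (hAboxx t) habs' hT htbT
    have h2 : volume (Aset Q p q t ∩ Pset f)
        ≤ ENNReal.ofReal ((1+κ)*T) * ∑ m, cylM m (Aset Q p q t) :=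
      le_trans (measure_mono inter_subset_left) h1
    have hfin : (∑ m, cylM m (Aset Q p q t)) ≠ ⊤ := by
      refine ne_of_lt ?_
      refine ENNReal.sum_lt_top.2 fun m _ => ?_
      exact lt_top_iff_ne_top.2 (hcyl_fin m t)
    have h3 := ENNReal.toReal_mono
      (ENNReal.mul_ne_top ENNReal.ofReal_ne_top hfin) h2
    rw [ENNReal.toReal_mul, ENNReal.toReal_ofReal (by positivity)] at h3
    have h4 : (∑ m, cylM m (Aset Q p q t)).toReal = SS Q p q t :=
      ENNReal.toReal_sum fun m _ => hcyl_fin m t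
    rw [h4] at h3
    exact h3
  have hβ : ∀ δ : ℝ, 0 < δ → ∃ t : ℝ, 0 < t ∧ t ≤ min Λ 1 ∧
      ∀ t' : ℝ, 0 < t' → t' ≤ t → (volume (Aset Q p q t' ∩ Pset f)).toReal < δ := by
    intro δ hδ
    have hvan := vanish hRQ hQpos hb hQ0 hR0 hfc h0
    have hev : ∀ᶠ k : ℕ in Filter.atTop,
        volume (Aset Q p q (1/(k+1)) ∩ Pset f) < ENNReal.ofReal δ :=
      hvan.eventually_lt_const (ENNReal.ofReal_pos.2 hδ)
    obtain ⟨k, hk⟩ := hev.exists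
    refine ⟨min (1/((k:ℝ)+1)) (min Λ 1), by positivity, min_le_right _ _, ?_⟩
    intro t' ht' ht'le
    have hsub : Aset Q p q t' ∩ Pset f ⊆ Aset Q p q (1/(k+1)) ∩ Pset f := by
      refine inter_subset_inter (fun x hx => ⟨hx.1, lt_of_lt_of_le hx.2 ?_⟩) le_rfl
      exact le_trans ht'le (min_le_left _ _)
    have h5 : volume (Aset Q p q t' ∩ Pset f) < ENNReal.ofReal δ :=
      lt_of_le_of_lt (measure_mono hsub) hk
    have h6 : volume (Aset Q p q t' ∩ Pset f) ≠ ⊤ := ne_top_of_lt h5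
    have h7 := (ENNReal.toReal_lt_toReal h6 ENNReal.ofReal_ne_top).2 h5
    rwa [ENNReal.toReal_ofReal hδ.le] at h7
  rcases Nat.eq_zero_or_pos n0 with hn0 | hn0
  · -- case N = 1
    subst hn0
    obtain ⟨t, ht, htle, hsmall⟩ := hβ (c0*ccap/(2*M+1)) (by positivity)
    have h1 := hF1 t ht
    have h2 : ccap ≤ SS Q p q (t/2) := by
      have h3 := hlow (t/2) (by positivity) (by
        have := le_trans htle (min_le_left _ _); linarith)
      simpa using h3
    have h3 := hsmall t ht le_rfl
    have h4 : (0:ℝ) ≤ (volume (Aset Q p q t ∩ Pset f)).toReal := ENNReal.toReal_nonneg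
    have e1 : c0 * ccap ≤ c0 * SS Q p q (t/2) :=
      mul_le_mul_of_nonneg_left h2 hc0pos.le
    have e2 : 2 * M * (volume (Aset Q p q t ∩ Pset f)).toReal
        ≤ 2 * M * (c0*ccap/(2*M+1)) :=
      mul_le_mul_of_nonneg_left h3.le (by linarith)
    have e3 : 2 * M * (c0*ccap/(2*M+1)) = (c0*ccap) * (2*M/(2*M+1)) := by ring
    have e4 : 2*M/(2*M+1) < 1 := by
      rw [div_lt_one (by linarith)]; linarith
    nlinarith [mul_pos hc0pos hccap_pos]
  · -- case N ≥ 2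
    set K0 : ℝ := 2*M/c0 with hK0
    have hK0n : 0 ≤ K0 := by positivity
    have hF1' : ∀ t : ℝ, 0 < t → SS Q p q (t/2)
        ≤ K0 * (volume (Aset Q p q t ∩ Pset f)).toReal := by
      intro t ht
      have h1 := hF1 t ht
      rw [hK0, div_mul_eq_mul_div, le_div_iff₀ hc0pos]
      have hcomm : SS Q p q (t/2) * c0 = c0 * SS Q p q (t/2) := mul_comm _ _
      linarith
    set θ : ℝ := min (1/2) (1/(2^(n0+1)*(K0*(1+κ)+1))) with hθ
    have hθpos : 0 < θ := by positivity
    have hθcontr : K0*(1+κ)*θ ≤ 1/2^(n0+1) := by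
      have h2 : (0:ℝ) < 2^(n0+1) := by positivity
      have h5 : (0:ℝ) ≤ K0*(1+κ) := by nlinarith [hκ]
      have h3 : (0:ℝ) < K0*(1+κ)+1 := by linarith
      have h1 : θ ≤ 1/(2^(n0+1)*(K0*(1+κ)+1)) := min_le_right _ _
      have h4 : K0*(1+κ)*θ ≤ (K0*(1+κ)) * (1/(2^(n0+1)*(K0*(1+κ)+1))) :=
        mul_le_mul_of_nonneg_left h1 h5
      refine le_trans h4 ?_
      have h6 : (K0*(1+κ)) * (1/(2^(n0+1)*(K0*(1+κ)+1)))
          = (K0*(1+κ))/(K0*(1+κ)+1) * (1/2^(n0+1)) := by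
        field_simp
      rw [h6]
      have h7 : (K0*(1+κ))/(K0*(1+κ)+1) ≤ 1 := by
        rw [div_le_one h3]; linarith
      calc (K0*(1+κ))/(K0*(1+κ)+1) * (1/2^(n0+1))
          ≤ 1 * (1/2^(n0+1)) := mul_le_mul_of_nonneg_right h7 (by positivity)
        _ = 1/2^(n0+1) := one_mul _
    obtain ⟨t1, ht1, ht1le, hsmall⟩ := hβ ((ccap*θ^n0)/(K0+1)) (by positivity)
    set t0 : ℝ := t1/2 with ht0def
    have ht0 : 0 < t0 := by positivity
    have ht0Λ : t0 ≤ Λ := by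
      have := le_trans ht1le (min_le_left _ _)
      rw [ht0def]; linarith
    have hXnn : (0:ℝ) ≤ ccap*θ^n0 := by positivity
    have hS0 : SS Q p q t0 ≤ ccap*θ^n0 := by
      have h1 := hF1' t1 ht1
      have h2 := hsmall t1 ht1 le_rfl
      have h3 : K0 * (volume (Aset Q p q t1 ∩ Pset f)).toReal
          ≤ K0 * ((ccap*θ^n0)/(K0+1)) := mul_le_mul_of_nonneg_left h2.le hK0n
      have h5 : K0*((ccap*θ^n0)/(K0+1)) = (ccap*θ^n0) * (K0/(K0+1)) := by ring
      have h6 : K0/(K0+1) ≤ 1 := by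
        rw [div_le_one (by linarith)]; linarith
      have h7 : (ccap*θ^n0) * (K0/(K0+1)) ≤ ccap*θ^n0 := by
        nlinarith [hXnn, h6, div_nonneg hK0n (by linarith : (0:ℝ) ≤ K0+1)]
      rw [ht0def]
      linarith [h1, h3, h5 ▸ h7]
    have htT : ∀ t : ℝ, 0 < t → t ≤ t0 → ∀ x ∈ Aset Q p q t, tbar v κ x ≤ θ := by
      intro t ht htle x hx
      have h1 := hcapR t x hx
      have h2 : SS Q p q t ≤ ccap*θ^n0 := le_trans (hSS_mono t t0 htle) hS0
      have h3 : tbar v κ x ^ n0 ≤ θ ^ n0 := by nlinarith [hccap_pos]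
      exact (pow_le_pow_iff_left₀ (tbar_nonneg hκ hvpos hx.1) hθpos.le hn0.ne').1 h3
    have hstep : ∀ t : ℝ, 0 < t → t ≤ t0 →
        SS Q p q (t/2) ≤ (1/2^(n0+1)) * SS Q p q t := by
      intro t ht htle
      have h1 := hF1' t ht
      have h2 := hupper t θ hθpos.le (htT t ht htle)
      calc SS Q p q (t/2) ≤ K0 * (volume (Aset Q p q t ∩ Pset f)).toReal := h1
        _ ≤ K0 * ((1+κ)*θ * SS Q p q t) := mul_le_mul_of_nonneg_left h2 hK0n
        _ = (K0*(1+κ)*θ) * SS Q p q t := by ring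
        _ ≤ (1/2^(n0+1)) * SS Q p q t :=
            mul_le_mul_of_nonneg_right hθcontr (hSS_nonneg t)
    have hiter : ∀ k : ℕ, SS Q p q (t0/2^k) ≤ SS Q p q t0 * (1/2^(n0+1))^k := by
      intro k
      induction k with
      | zero => simp
      | succ k ih =>
        have ht0k : (0:ℝ) < t0/2^k := by positivity
        have htlek : t0/2^k ≤ t0 := by
          rw [div_le_iff₀ (by positivity)]
          nlinarith [one_le_pow₀ (by norm_num : (1:ℝ) ≤ 2) (n := k)]
        have h1 := hstep (t0/2^k) ht0k htlek
        have h2 : t0/2^k/2 = t0/2^(k+1) := by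
          rw [div_div, pow_succ]
        rw [h2] at h1
        calc SS Q p q (t0/2^(k+1)) ≤ (1/2^(n0+1)) * SS Q p q (t0/2^k) := h1
          _ ≤ (1/2^(n0+1)) * (SS Q p q t0 * (1/2^(n0+1))^k) :=
              mul_le_mul_of_nonneg_left ih (by positivity)
          _ = SS Q p q t0 * (1/2^(n0+1))^(k+1) := by ring
    set a : ℝ := ccap * (t0/(2*Λ*(1+κ)))^n0 with ha
    have hapos : 0 < a := by positivity
    have hcon : ∀ k : ℕ, a * 2^k ≤ SS Q p q t0 := by
      intro k
      have ht0k : (0:ℝ) < t0/2^k := by positivity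
      have htlek : t0/2^k ≤ t0 := by
        rw [div_le_iff₀ (by positivity)]
        nlinarith [one_le_pow₀ (by norm_num : (1:ℝ) ≤ 2) (n := k)]
      have h1 := hlow (t0/2^k) ht0k (le_trans htlek ht0Λ)
      have h2 := hiter k
      have e1 : t0/2^k/(2*Λ*(1+κ)) = (t0/(2*Λ*(1+κ)))/2^k := by ring
      have e2 : ((t0/(2*Λ*(1+κ)))/2^k)^n0 = (t0/(2*Λ*(1+κ)))^n0 / (2^k)^n0 :=
        div_pow _ _ n0
      rw [e1, e2] at h1
      have e3 : (1/2^(n0+1))^k = 1/((2:ℝ)^(n0+1))^k := by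
        rw [div_pow, one_pow]
      rw [e3, mul_one_div] at h2
      -- combine: ccap * X^n0 / (2^k)^n0 ≤ S0 / (2^(n0+1))^k
      have h3 : a / ((2:ℝ)^k)^n0 ≤ SS Q p q t0 / ((2:ℝ)^(n0+1))^k := by
        rw [ha, mul_div_assoc]
        exact le_trans h1 (by linarith [h2])
      have hp1 : (0:ℝ) < ((2:ℝ)^k)^n0 := by positivity
      have hp2 : (0:ℝ) < ((2:ℝ)^(n0+1))^k := by positivity
      rw [div_le_div_iff₀ hp1 hp2] at h3
      have e4 : ((2:ℝ)^(n0+1))^k = ((2:ℝ)^k)^n0 * 2^k := by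
        rw [← pow_mul, ← pow_mul, ← pow_add]
        congr 1
        ring
      rw [e4] at h3
      have h4 : a * 2^k * ((2:ℝ)^k)^n0 ≤ SS Q p q t0 * ((2:ℝ)^k)^n0 := by
        nlinarith [h3]
      exact le_of_mul_le_mul_right h4 hp1
    obtain ⟨k, hk⟩ := pow_unbounded_of_one_lt (SS Q p q t0 / a) (by norm_num : (1:ℝ) < 2)
    have h5 : SS Q p q t0 < a * 2^k := by
      rw [div_lt_iff₀ hapos] at hk
      linarith
    linarith [hcon k]

end Stmt13
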